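/- arXiv:1310.0489 — 4 statements merged into one kernel-verified Lean document; each statement's English description precedes it below -/
import Mathlib

section
/- Let c > 0. Then there exist ε ∈ (0,1) and β > 0 such that for every n and every finite sequence of nonnegative random variables Z₁,…,Zₙ satisfying P[Z_k > z ∣ Z₁,…,Z_{k-1}] ≤ e^{-cz} for all z > 0 and all k, one has P[∑_{k=1}^{⌊εn⌋} Z_k ≥ n] ≤ e^{-βn}. -/
open MeasureTheory Filter

set_option maxHeartbeats 1000000 in
/-- Let `c > 0`.  There exist `ε ∈ (0,1)` and `β > 0` such that for every `n` and all
nonnegative random variables `Z₁, …, Zₙ` with conditional tail bound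
`P[Z_k > z ∣ Z₁, …, Z_{k-1}] ≤ e^{-c z}` (`z > 0`), one has
`P[∑_{k=1}^{⌊εn⌋} Z_k ≥ n] ≤ e^{-βn}`. -/
theorem sum_exp_tails_large_deviation (c : ℝ) (hc : 0 < c) :
    ∃ ε ∈ Set.Ioo (0 : ℝ) 1, ∃ β > (0 : ℝ),
      ∀ (Ω : Type) (m0 : MeasurableSpace Ω) (μ : Measure Ω), IsProbabilityMeasure μ →
        ∀ (n : ℕ) (Z : ℕ → Ω → ℝ),
          (∀ k, Measurable (Z k)) →
          (∀ k ω, 0 ≤ Z k ω) →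
          (∀ k, 1 ≤ k → k ≤ n → ∀ z : ℝ, 0 < z →
            ∀ᵐ ω ∂μ,
              (μ[({ω | z < Z k ω}).indicator (fun _ => (1 : ℝ))|
                  ⨆ i ∈ Finset.Icc 1 (k - 1), MeasurableSpace.comap (Z i) inferInstance]) ω
                ≤ Real.exp (-c * z)) →
          μ {ω | (n : ℝ) ≤ ∑ k ∈ Finset.Icc 1 ⌊ε * n⌋₊, Z k ω}
            ≤ ENNReal.ofReal (Real.exp (-β * n)) := by
  classical
  set r : ℝ := Real.exp (-(c / 2)) with hrdef
  have hr0 : 0 < r := Real.exp_pos _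
  have hr1 : r < 1 := Real.exp_lt_one_iff.mpr (by linarith)
  have hr1' : 0 < 1 - r := by linarith
  set K : ℝ := 1 + Real.exp (c / 2) + Real.exp (c / 2) * (1 - r)⁻¹ with hKdef
  have hexp_pos : 0 < Real.exp (c / 2) := Real.exp_pos _
  have hK1 : 1 < K := by
    have h2 : 0 < Real.exp (c / 2) * (1 - r)⁻¹ := by positivity
    rw [hKdef]
    linarith
  have hK0 : 0 < K := by linarith
  have hlogK : 0 < Real.log K := Real.log_pos hK1
  set ε : ℝ := min (1 / 2) (c / (4 * Real.log K)) with hεdef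
  have hε0 : 0 < ε := lt_min (by norm_num) (by positivity)
  have hε1 : ε < 1 := lt_of_le_of_lt (min_le_left _ _) (by norm_num)
  refine ⟨ε, ⟨hε0, hε1⟩, c / 4, by positivity, ?_⟩
  intro Ω m0 μ hprob n Z hZm hZnn htail
  rcases Nat.eq_zero_or_pos n with rfl | hn
  · have hset : {ω : Ω | ((0 : ℕ) : ℝ) ≤ ∑ k ∈ Finset.Icc 1 ⌊ε * (0 : ℕ)⌋₊, Z k ω}
        = Set.univ := by
      ext ω
      simp only [Set.mem_setOf_eq, Set.mem_univ, iff_true]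
      push_cast
      exact Finset.sum_nonneg fun i _ => hZnn i ω
    rw [hset, measure_univ]
    simp
  -- main case, n ≥ 1
  set Y : ℕ → Ω → ℝ := fun k ω => min (Z k ω) n with hYdef
  set E : ℕ → Ω → ℝ := fun k ω => Real.exp (c / 2 * Y k ω) with hEdef
  set g : ℕ → Ω → ℝ := fun k ω => ∏ i ∈ Finset.Icc 1 k, E i ω with hgdef
  have hYmeas : ∀ k, Measurable (Y k) := fun k => (hZm k).min measurable_const
  have hYnn : ∀ k ω, 0 ≤ Y k ω := fun k ω => le_min (hZnn k ω) (by positivity)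
  have hYle : ∀ k ω, Y k ω ≤ n := fun k ω => min_le_right _ _
  have hEmeas : ∀ k, Measurable (E k) := fun k =>
    Real.measurable_exp.comp (measurable_const.mul (hYmeas k))
  have hE1 : ∀ k ω, (1 : ℝ) ≤ E k ω := fun k ω =>
    Real.one_le_exp (mul_nonneg (by positivity) (hYnn k ω))
  have hEbd : ∀ k ω, E k ω ≤ Real.exp (c / 2 * n) := fun k ω =>
    Real.exp_le_exp.mpr (mul_le_mul_of_nonneg_left (hYle k ω) (by positivity))
  have hEnn : ∀ k ω, (0 : ℝ) ≤ E k ω := fun k ω => le_trans zero_le_one (hE1 k ω)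
  have hEint : ∀ k, Integrable (E k) μ := by
    intro k
    refine (integrable_const (Real.exp (c / 2 * n))).mono'
      (hEmeas k).aestronglyMeasurable (ae_of_all _ fun ω => ?_)
    rw [Real.norm_eq_abs, abs_of_nonneg (hEnn k ω)]
    exact hEbd k ω
  have hgnn : ∀ k ω, (0 : ℝ) ≤ g k ω := fun k ω =>
    Finset.prod_nonneg fun i _ => hEnn i ω
  have hgbd : ∀ k ω, g k ω ≤ Real.exp (c / 2 * n) ^ k := by
    intro k ω
    calc g k ω ≤ ∏ _i ∈ Finset.Icc 1 k, Real.exp (c / 2 * n) :=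
          Finset.prod_le_prod (fun i _ => hEnn i ω) (fun i _ => hEbd i ω)
      _ = Real.exp (c / 2 * n) ^ k := by
          rw [Finset.prod_const, Nat.card_Icc, Nat.add_sub_cancel]
  have hgmeas : ∀ k, Measurable (g k) := fun k =>
    Finset.measurable_prod _ fun i _ => hEmeas i
  have hgint : ∀ k, Integrable (g k) μ := by
    intro k
    refine (integrable_const (Real.exp (c / 2 * n) ^ k)).mono'
      (hgmeas k).aestronglyMeasurable (ae_of_all _ fun ω => ?_)
    rw [Real.norm_eq_abs, abs_of_nonneg (hgnn k ω)]
    exact hgbd k ω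
  have hFle : ∀ j, (⨆ i ∈ Finset.Icc 1 j, MeasurableSpace.comap (Z i) inferInstance) ≤ m0 :=
    fun j => iSup₂_le fun i _ => (hZm i).comap_le
  have hgSM : ∀ k, StronglyMeasurable[⨆ i ∈ Finset.Icc 1 k,
      MeasurableSpace.comap (Z i) inferInstance] (g k) := by
    intro k
    refine Measurable.stronglyMeasurable ?_
    refine Finset.measurable_prod _ fun i hi => ?_
    have h1 : MeasurableSpace.comap (Z i) inferInstance ≤
        ⨆ i ∈ Finset.Icc 1 k, MeasurableSpace.comap (Z i) inferInstance :=
      le_biSup (fun i => MeasurableSpace.comap (Z i) inferInstance) hi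
    have h2 := Measurable.of_comap_le h1
    exact Real.measurable_exp.comp (measurable_const.mul (h2.min measurable_const))
  -- geometric bound
  have hgeom : ∑ j ∈ Finset.Icc 1 (n - 1), Real.exp (c / 2 * (j + 1)) * Real.exp (-c * j)
      ≤ Real.exp (c / 2) * (1 - r)⁻¹ := by
    have hterm : ∀ j : ℕ, Real.exp (c / 2 * (j + 1)) * Real.exp (-c * j)
        = Real.exp (c / 2) * r ^ j := by
      intro j
      rw [hrdef, ← Real.exp_nat_mul, ← Real.exp_add, ← Real.exp_add]
      congr 1
      ring
    simp only [hterm]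
    rw [← Finset.mul_sum]
    refine mul_le_mul_of_nonneg_left ?_ (Real.exp_nonneg _)
    calc ∑ j ∈ Finset.Icc 1 (n - 1), r ^ j ≤ ∑ j ∈ Finset.range n, r ^ j := by
          refine Finset.sum_le_sum_of_subset_of_nonneg ?_ fun j _ _ => pow_nonneg hr0.le j
          intro j hj
          rw [Finset.mem_Icc] at hj
          rw [Finset.mem_range]
          omega
      _ ≤ (1 - r)⁻¹ := by
          rw [geom_sum_eq (by linarith : r ≠ 1)]
          have h2 : (r ^ n - 1) / (r - 1) = (1 - r ^ n) * (1 - r)⁻¹ := by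
            rw [div_eq_iff (by linarith : r - 1 ≠ 0)]
            field_simp
            ring
          rw [h2]
          nlinarith [pow_nonneg hr0.le n, inv_nonneg.mpr hr1'.le,
            mul_pos (pow_pos hr0 n) (inv_pos.mpr hr1')]
  -- key conditional bound
  have hcond : ∀ k, 1 ≤ k → k ≤ n → ∀ᵐ ω ∂μ,
      (μ[E k| ⨆ i ∈ Finset.Icc 1 (k - 1), MeasurableSpace.comap (Z i) inferInstance]) ω ≤ K := by
    intro k hk1 hkn
    have hFm : (⨆ i ∈ Finset.Icc 1 (k - 1), MeasurableSpace.comap (Z i) inferInstance) ≤ m0 :=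
      hFle (k - 1)
    set ind : ℕ → Ω → ℝ := fun j => ({ω | (j : ℝ) < Z k ω}).indicator (fun _ => (1 : ℝ))
      with hinddef
    have hindms : ∀ j : ℕ, MeasurableSet[m0] {ω | (j : ℝ) < Z k ω} := fun j =>
      measurableSet_lt measurable_const (hZm k)
    have hindint : ∀ j : ℕ, Integrable (ind j) μ := fun j =>
      (integrable_const (1 : ℝ)).indicator (hindms j)
    have hindnn : ∀ j ω, (0 : ℝ) ≤ ind j ω := fun j ω =>
      Set.indicator_nonneg (fun _ _ => zero_le_one) ω
    set hfun : Ω → ℝ := (fun _ => (1 + Real.exp (c / 2))) +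
      ∑ j ∈ Finset.Icc 1 (n - 1), Real.exp (c / 2 * (j + 1)) • ind j with hhdef
    have happ : ∀ ω, hfun ω = (1 + Real.exp (c / 2)) +
        ∑ j ∈ Finset.Icc 1 (n - 1), Real.exp (c / 2 * (j + 1)) * ind j ω := by
      intro ω
      simp [hhdef, Finset.sum_apply, smul_eq_mul]
    have hsumint : Integrable (∑ j ∈ Finset.Icc 1 (n - 1),
        Real.exp (c / 2 * (j + 1)) • ind j) μ :=
      integrable_finset_sum' _ fun j _ => (hindint j).smul (Real.exp (c / 2 * (j + 1)))
    have hhint : Integrable hfun μ := (integrable_const _).add hsumint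
    have hpoint : ∀ ω, E k ω ≤ hfun ω := by
      intro ω
      rw [happ ω]
      have hsumnn : (0 : ℝ) ≤ ∑ j ∈ Finset.Icc 1 (n - 1),
          Real.exp (c / 2 * (j + 1)) * ind j ω :=
        Finset.sum_nonneg fun j _ => mul_nonneg (Real.exp_nonneg _) (hindnn j ω)
      by_cases hY1 : Y k ω ≤ 1
      · have h1 : E k ω ≤ Real.exp (c / 2) :=
          Real.exp_le_exp.mpr (by nlinarith)
        linarith
      · push_neg at hY1
        have hx1 : (1 : ℝ) < Z k ω := lt_of_lt_of_le hY1 (min_le_left _ _)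
        have hn2 : 2 ≤ n := by
          have h1 : (1 : ℝ) < (n : ℝ) := lt_of_lt_of_le hY1 (hYle k ω)
          exact_mod_cast by exact_mod_cast Nat.one_lt_cast.mp h1
        have hceil2 : 2 ≤ ⌈Z k ω⌉₊ := by
          have := Nat.lt_ceil.mpr (show ((1 : ℕ) : ℝ) < Z k ω by exact_mod_cast hx1)
          omega
        set j0 : ℕ := min (n - 1) (⌈Z k ω⌉₊ - 1) with hj0def
        have hj0mem : j0 ∈ Finset.Icc 1 (n - 1) := by
          rw [Finset.mem_Icc]
          constructor
          · have := le_min (show 1 ≤ n - 1 by omega) (show 1 ≤ ⌈Z k ω⌉₊ - 1 by omega)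
            omega
          · exact min_le_left _ _
        have hj0lt : (j0 : ℝ) < Z k ω := by
          have h2 : (⌈Z k ω⌉₊ : ℝ) < Z k ω + 1 :=
            Nat.ceil_lt_add_one (le_of_lt (lt_trans one_pos hx1))
          have h1 : ((⌈Z k ω⌉₊ - 1 : ℕ) : ℝ) < Z k ω := by
            rw [Nat.cast_sub (by omega : 1 ≤ ⌈Z k ω⌉₊)]
            push_cast
            linarith
          calc (j0 : ℝ) ≤ ((⌈Z k ω⌉₊ - 1 : ℕ) : ℝ) := by exact_mod_cast min_le_right _ _
            _ < Z k ω := h1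
        have hind1 : ind j0 ω = 1 := by
          have hmem : ω ∈ {ω | (j0 : ℝ) < Z k ω} := hj0lt
          rw [hinddef]
          exact Set.indicator_of_mem hmem _
        have hYj0 : Y k ω ≤ (j0 : ℝ) + 1 := by
          rcases le_total (n - 1) (⌈Z k ω⌉₊ - 1) with hcase | hcase
          · have hje : j0 = n - 1 := min_eq_left hcase
            have hcast : ((n - 1 : ℕ) : ℝ) + 1 = n := by
              rw [Nat.cast_sub hn]
              ring
            rw [hje, hcast]
            exact hYle k ω
          · have hje : j0 = ⌈Z k ω⌉₊ - 1 := min_eq_right hcase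
            have h2 : Z k ω ≤ (⌈Z k ω⌉₊ : ℝ) := Nat.le_ceil _
            have h3 : Y k ω ≤ Z k ω := min_le_left _ _
            rw [hje, Nat.cast_sub (by omega : 1 ≤ ⌈Z k ω⌉₊)]
            push_cast
            linarith
        have hterm : E k ω ≤ Real.exp (c / 2 * (j0 + 1)) * ind j0 ω := by
          rw [hind1, mul_one]
          exact Real.exp_le_exp.mpr (mul_le_mul_of_nonneg_left hYj0 (by positivity))
        have hsum : Real.exp (c / 2 * (j0 + 1)) * ind j0 ω ≤
            ∑ j ∈ Finset.Icc 1 (n - 1), Real.exp (c / 2 * (j + 1)) * ind j ω :=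
          Finset.single_le_sum (f := fun j : ℕ => Real.exp (c / 2 * (j + 1)) * ind j ω)
            (fun j _ => mul_nonneg (Real.exp_nonneg _) (hindnn j ω)) hj0mem
        have : (0:ℝ) < Real.exp (c / 2) := Real.exp_pos _
        linarith
    have hmono : μ[E k|(⨆ i ∈ Finset.Icc 1 (k - 1), MeasurableSpace.comap (Z i) inferInstance)] ≤ᵐ[μ] μ[hfun|(⨆ i ∈ Finset.Icc 1 (k - 1), MeasurableSpace.comap (Z i) inferInstance)] :=
      condExp_mono (hEint k) hhint (ae_of_all _ hpoint)
    have hadd : μ[hfun|(⨆ i ∈ Finset.Icc 1 (k - 1), MeasurableSpace.comap (Z i) inferInstance)] =ᵐ[μ] (fun _ => (1 + Real.exp (c / 2))) +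
        μ[(∑ j ∈ Finset.Icc 1 (n - 1), Real.exp (c / 2 * (j + 1)) • ind j)|(⨆ i ∈ Finset.Icc 1 (k - 1), MeasurableSpace.comap (Z i) inferInstance)] := by
      refine (condExp_add (integrable_const _) hsumint _).trans ?_
      rw [condExp_const hFm]
    have hcsum : μ[(∑ j ∈ Finset.Icc 1 (n - 1), Real.exp (c / 2 * (j + 1)) • ind j)|(⨆ i ∈ Finset.Icc 1 (k - 1), MeasurableSpace.comap (Z i) inferInstance)]
        =ᵐ[μ] ∑ j ∈ Finset.Icc 1 (n - 1), μ[Real.exp (c / 2 * (j + 1)) • ind j|(⨆ i ∈ Finset.Icc 1 (k - 1), MeasurableSpace.comap (Z i) inferInstance)] :=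
      condExp_finsetSum (fun j _ => (hindint j).smul (Real.exp (c / 2 * (j + 1)))) _
    have hall : ∀ᵐ ω ∂μ, ∀ j ∈ Finset.Icc 1 (n - 1),
        (μ[Real.exp (c / 2 * (j + 1)) • ind j|(⨆ i ∈ Finset.Icc 1 (k - 1), MeasurableSpace.comap (Z i) inferInstance)]) ω
          = Real.exp (c / 2 * (j + 1)) * (μ[ind j|(⨆ i ∈ Finset.Icc 1 (k - 1), MeasurableSpace.comap (Z i) inferInstance)]) ω := by
      rw [eventually_all_finset]
      intro j _
      filter_upwards [condExp_smul (μ := μ) (m := ⨆ i ∈ Finset.Icc 1 (k - 1), MeasurableSpace.comap (Z i) inferInstance) (Real.exp (c / 2 * (j + 1))) (ind j)]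
        with ω hω
      simpa using hω
    have htails : ∀ᵐ ω ∂μ, ∀ j ∈ Finset.Icc 1 (n - 1),
        (μ[ind j|(⨆ i ∈ Finset.Icc 1 (k - 1), MeasurableSpace.comap (Z i) inferInstance)]) ω ≤ Real.exp (-c * j) := by
      rw [eventually_all_finset]
      intro j hj
      have hj1 : 1 ≤ j := (Finset.mem_Icc.mp hj).1
      exact htail k hk1 hkn j (by exact_mod_cast Nat.pos_of_ne_zero (by omega))
    filter_upwards [hmono, hadd, hcsum, hall, htails] with ω h1 h2 h3 h4 h5
    have e2 : (μ[hfun|(⨆ i ∈ Finset.Icc 1 (k - 1), MeasurableSpace.comap (Z i) inferInstance)]) ω = (1 + Real.exp (c / 2)) +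
        (μ[(∑ j ∈ Finset.Icc 1 (n - 1), Real.exp (c / 2 * (j + 1)) • ind j)|(⨆ i ∈ Finset.Icc 1 (k - 1), MeasurableSpace.comap (Z i) inferInstance)]) ω := by
      rw [h2]
      simp
    have e3 : (μ[(∑ j ∈ Finset.Icc 1 (n - 1), Real.exp (c / 2 * (j + 1)) • ind j)|(⨆ i ∈ Finset.Icc 1 (k - 1), MeasurableSpace.comap (Z i) inferInstance)]) ω
        = ∑ j ∈ Finset.Icc 1 (n - 1), (μ[Real.exp (c / 2 * (j + 1)) • ind j|(⨆ i ∈ Finset.Icc 1 (k - 1), MeasurableSpace.comap (Z i) inferInstance)]) ω := by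
      rw [h3]
      simp [Finset.sum_apply]
    have e4 : ∑ j ∈ Finset.Icc 1 (n - 1), (μ[Real.exp (c / 2 * (j + 1)) • ind j|(⨆ i ∈ Finset.Icc 1 (k - 1), MeasurableSpace.comap (Z i) inferInstance)]) ω
        = ∑ j ∈ Finset.Icc 1 (n - 1), Real.exp (c / 2 * (j + 1)) * (μ[ind j|(⨆ i ∈ Finset.Icc 1 (k - 1), MeasurableSpace.comap (Z i) inferInstance)]) ω :=
      Finset.sum_congr rfl h4
    have e5 : ∑ j ∈ Finset.Icc 1 (n - 1), Real.exp (c / 2 * (j + 1)) * (μ[ind j|(⨆ i ∈ Finset.Icc 1 (k - 1), MeasurableSpace.comap (Z i) inferInstance)]) ω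
        ≤ ∑ j ∈ Finset.Icc 1 (n - 1), Real.exp (c / 2 * (j + 1)) * Real.exp (-c * j) :=
      Finset.sum_le_sum fun j hj =>
        mul_le_mul_of_nonneg_left (h5 j hj) (Real.exp_nonneg _)
    calc (μ[E k|(⨆ i ∈ Finset.Icc 1 (k - 1), MeasurableSpace.comap (Z i) inferInstance)]) ω ≤ (μ[hfun|(⨆ i ∈ Finset.Icc 1 (k - 1), MeasurableSpace.comap (Z i) inferInstance)]) ω := h1
      _ = (1 + Real.exp (c / 2)) +
          ∑ j ∈ Finset.Icc 1 (n - 1), (μ[Real.exp (c / 2 * (j + 1)) • ind j|(⨆ i ∈ Finset.Icc 1 (k - 1), MeasurableSpace.comap (Z i) inferInstance)]) ω := by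
          rw [e2, e3]
      _ ≤ (1 + Real.exp (c / 2)) +
          ∑ j ∈ Finset.Icc 1 (n - 1), Real.exp (c / 2 * (j + 1)) * Real.exp (-c * j) := by
          rw [e4]
          linarith [e5]
      _ ≤ K := by
          rw [hKdef]
          linarith [hgeom]
  -- induction: Chernoff bound for the product
  have hchern : ∀ k, k ≤ n → ∫ ω, g k ω ∂μ ≤ K ^ k := by
    intro k
    induction k with
    | zero =>
        intro _
        have : g 0 = fun _ => (1 : ℝ) := by
          funext ω
          simp [hgdef]
        rw [this]
        simp
    | succ k ih =>
        intro hk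
        have hk' : k ≤ n := Nat.le_of_succ_le hk
        have hsplit : ∀ ω, g (k + 1) ω = g k ω * E (k + 1) ω := by
          intro ω
          rw [hgdef]
          exact Finset.prod_Icc_succ_top (by omega) _
        have hfgint : Integrable (g k * E (k + 1)) μ := by
          refine (integrable_const (Real.exp (c / 2 * n) ^ k * Real.exp (c / 2 * n))).mono'
            ((hgmeas k).mul (hEmeas (k + 1))).aestronglyMeasurable (ae_of_all _ fun ω => ?_)
          have h0 : (0:ℝ) ≤ g k ω * E (k + 1) ω := mul_nonneg (hgnn k ω) (hEnn (k+1) ω)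
          rw [Pi.mul_apply, Real.norm_eq_abs, abs_of_nonneg h0]
          exact mul_le_mul (hgbd k ω) (hEbd (k+1) ω) (hEnn (k+1) ω)
            (pow_nonneg (Real.exp_nonneg _) k)
        have hFk := hFle k
        have hpull := condExp_mul_of_stronglyMeasurable_left (hgSM k) hfgint (hEint (k + 1))
        have hbound := hcond (k + 1) (by omega) hk
        simp only [Nat.add_sub_cancel] at hbound
        have hae : μ[g k * E (k + 1)|⨆ i ∈ Finset.Icc 1 k,
            MeasurableSpace.comap (Z i) inferInstance] ≤ᵐ[μ] fun ω => K * g k ω := by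
          filter_upwards [hpull, hbound] with ω hw1 hw2
          have : (g k * μ[E (k + 1)|⨆ i ∈ Finset.Icc 1 k,
              MeasurableSpace.comap (Z i) inferInstance]) ω ≤ K * g k ω := by
            rw [Pi.mul_apply]
            calc g k ω * (μ[E (k + 1)|⨆ i ∈ Finset.Icc 1 k,
                MeasurableSpace.comap (Z i) inferInstance]) ω ≤ g k ω * K :=
                  mul_le_mul_of_nonneg_left hw2 (hgnn k ω)
              _ = K * g k ω := mul_comm _ _
          rw [hw1]
          exact this
        calc ∫ ω, g (k + 1) ω ∂μ = ∫ ω, (g k * E (k + 1)) ω ∂μ := by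
              refine integral_congr_ae (ae_of_all _ fun ω => ?_)
              rw [hsplit ω, Pi.mul_apply]
          _ = ∫ ω, (μ[g k * E (k + 1)|⨆ i ∈ Finset.Icc 1 k,
              MeasurableSpace.comap (Z i) inferInstance]) ω ∂μ :=
              (integral_condExp hFk).symm
          _ ≤ ∫ ω, K * g k ω ∂μ :=
              integral_mono_ae integrable_condExp ((hgint k).const_mul K) hae
          _ = K * ∫ ω, g k ω ∂μ := integral_const_mul K _
          _ ≤ K * K ^ k := mul_le_mul_of_nonneg_left (ih hk') hK0.le
          _ = K ^ (k + 1) := (pow_succ' K k).symm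
  -- Markov and conclusion
  set m := ⌊ε * n⌋₊ with hmdef
  have hmn : m ≤ n := by
    have hle : ε * n ≤ ((n : ℕ) : ℝ) := by
      nlinarith [hε1, Nat.cast_nonneg (α := ℝ) n]
    calc m ≤ ⌊((n : ℕ) : ℝ)⌋₊ := Nat.floor_mono hle
      _ = n := Nat.floor_natCast n
  have hsub : {ω | (n : ℝ) ≤ ∑ k ∈ Finset.Icc 1 m, Z k ω}
      ⊆ {ω | Real.exp (c / 2 * n) ≤ g m ω} := by
    intro ω hω
    simp only [Set.mem_setOf_eq] at hω ⊢
    have hsumY : (n : ℝ) ≤ ∑ k ∈ Finset.Icc 1 m, Y k ω := by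
      by_cases hex : ∃ k ∈ Finset.Icc 1 m, (n : ℝ) ≤ Z k ω
      · obtain ⟨k, hk, hkZ⟩ := hex
        have h1 : Y k ω = n := min_eq_right hkZ
        calc (n : ℝ) = Y k ω := h1.symm
          _ ≤ ∑ k ∈ Finset.Icc 1 m, Y k ω :=
            Finset.single_le_sum (fun i _ => hYnn i ω) hk
      · push_neg at hex
        have heq : ∀ k ∈ Finset.Icc 1 m, Y k ω = Z k ω := fun k hk =>
          min_eq_left (hex k hk).le
        rw [Finset.sum_congr rfl heq]
        exact hω
    have hgm : g m ω = Real.exp (c / 2 * ∑ k ∈ Finset.Icc 1 m, Y k ω) := by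
      rw [hgdef, Finset.mul_sum, Real.exp_sum]
    rw [hgm]
    exact Real.exp_le_exp.mpr (mul_le_mul_of_nonneg_left hsumY (by positivity))
  have hmark := mul_meas_ge_le_integral_of_nonneg (μ := μ) (f := g m)
    (ae_of_all _ fun ω => hgnn m ω) (hgint m) (Real.exp (c / 2 * n))
  have hexp_pos' : (0 : ℝ) < Real.exp (c / 2 * n) := Real.exp_pos _
  have htoReal : (μ {ω | (n : ℝ) ≤ ∑ k ∈ Finset.Icc 1 m, Z k ω}).toReal
      ≤ Real.exp (-(c / 2) * n) * K ^ m := by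
    have h1 : (μ {ω | (n : ℝ) ≤ ∑ k ∈ Finset.Icc 1 m, Z k ω}).toReal
        ≤ (μ {x | Real.exp (c / 2 * n) ≤ g m x}).toReal :=
      ENNReal.toReal_mono (measure_ne_top μ _) (measure_mono hsub)
    have h3 := hmark.trans (hchern m hmn)
    have hinv : Real.exp (-(c / 2) * n) = (Real.exp (c / 2 * n))⁻¹ := by
      rw [← Real.exp_neg]
      ring_nf
    have h4 : (μ {x | Real.exp (c / 2 * n) ≤ g m x}).toReal
        ≤ Real.exp (-(c / 2) * n) * K ^ m := by
      rw [hinv, ← div_eq_inv_mul, le_div_iff₀ hexp_pos']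
      rw [measureReal_def] at h3
      linarith [h3]
    linarith
  have hfinal : Real.exp (-(c / 2) * n) * K ^ m ≤ Real.exp (-(c / 4) * n) := by
    have hKm : K ^ m = Real.exp (m * Real.log K) := by
      rw [Real.exp_nat_mul, Real.exp_log hK0]
    rw [hKm, ← Real.exp_add]
    apply Real.exp_le_exp.mpr
    have h1 : (m : ℝ) ≤ ε * n := Nat.floor_le (by positivity)
    have h2 : ε * Real.log K ≤ c / 4 := by
      have h3 : ε ≤ c / (4 * Real.log K) := min_le_right _ _
      calc ε * Real.log K ≤ (c / (4 * Real.log K)) * Real.log K :=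
            mul_le_mul_of_nonneg_right h3 hlogK.le
        _ = c / 4 := by
            field_simp
    have h4 : (m : ℝ) * Real.log K ≤ (c / 4) * n := by
      nlinarith [mul_le_mul_of_nonneg_right h1 hlogK.le,
        mul_le_mul_of_nonneg_right h2 (Nat.cast_nonneg (α := ℝ) n)]
    linarith
  calc μ {ω | (n : ℝ) ≤ ∑ k ∈ Finset.Icc 1 m, Z k ω}
      = ENNReal.ofReal ((μ {ω | (n : ℝ) ≤ ∑ k ∈ Finset.Icc 1 m, Z k ω}).toReal) :=
        (ENNReal.ofReal_toReal (measure_ne_top μ _)).symm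
    _ ≤ ENNReal.ofReal (Real.exp (-(c / 4) * n)) :=
        ENNReal.ofReal_le_ofReal (htoReal.trans hfinal)
end

section
/- Let (Aₙ)_{n≥1} be events adapted to a filtration (Fₙ) with P(A_n ∣ F_{n-1}) ≥ p > 0 almost surely for all n. Then liminf_{n→∞} (1/n)·∑_{k=1}^{n} 1_{A_k} ≥ p almost surely. -/
open MeasureTheory Filter
open Topology

lemma nat_sqrt_tendsto : Tendsto Nat.sqrt atTop atTop := by
  refine tendsto_atTop_atTop.2 fun b => ⟨b * b, fun a ha => ?_⟩
  exact Nat.le_sqrt.2 ha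

lemma interp_aux (a : ℕ → ℝ) (ha : ∀ k, 1 ≤ k → |a k| ≤ 1)
    (h : Tendsto (fun n : ℕ => (∑ k ∈ Finset.Icc 1 (n ^ 2), a k) / ((n : ℝ) ^ 2)) atTop (𝓝 0)) :
    Tendsto (fun n : ℕ => (∑ k ∈ Finset.Icc 1 n, a k) / (n : ℝ)) atTop (𝓝 0) := by
  set S : ℕ → ℝ := fun n => ∑ k ∈ Finset.Icc 1 n, a k with hS
  have key : ∀ m : ℕ, 1 ≤ m →
      |S m / (m : ℝ)| ≤ |S (Nat.sqrt m ^ 2)| / ((Nat.sqrt m : ℝ) ^ 2) + 2 / (Nat.sqrt m : ℝ) := by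
    intro m hm
    set n := Nat.sqrt m with hn
    have hn1 : 1 ≤ n := Nat.one_le_iff_ne_zero.2 (by
      simp [hn, Nat.sqrt_eq_zero]; omega)
    have hle : n ^ 2 ≤ m := by simpa [pow_two] using Nat.sqrt_le' m
    have hlt : m < (n + 1) ^ 2 := by
      simpa [pow_two] using Nat.lt_succ_sqrt' m
    have hsplit : S (n ^ 2) + ∑ k ∈ Finset.Ioc (n ^ 2) m, a k = S m := by
      simp only [hS, ← Finset.Icc_add_one_left_eq_Ioc 0]
      exact Finset.sum_Ioc_consecutive _ (Nat.zero_le _) hle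
    have htail : |∑ k ∈ Finset.Ioc (n ^ 2) m, a k| ≤ 2 * n := by
      calc |∑ k ∈ Finset.Ioc (n ^ 2) m, a k| ≤ ∑ k ∈ Finset.Ioc (n ^ 2) m, |a k| :=
            Finset.abs_sum_le_sum_abs _ _
        _ ≤ ∑ _k ∈ Finset.Ioc (n ^ 2) m, (1 : ℝ) := by
            refine Finset.sum_le_sum fun k hk => ha k ?_
            have := (Finset.mem_Ioc.1 hk).1
            omega
        _ = ((m - n ^ 2 : ℕ) : ℝ) := by simp [Nat.card_Ioc]
        _ ≤ 2 * n := by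
            have hlt2 : m < n ^ 2 + 2 * n + 1 := by
              calc m < (n + 1) ^ 2 := hlt
                _ = n ^ 2 + 2 * n + 1 := by ring
            have : m - n ^ 2 ≤ 2 * n := by
              generalize n ^ 2 = q at hle hlt2 ⊢
              omega
            calc ((m - n ^ 2 : ℕ) : ℝ) ≤ ((2 * n : ℕ) : ℝ) := by exact_mod_cast this
              _ = 2 * n := by push_cast; ring
    have hmpos : (0 : ℝ) < m := by exact_mod_cast hm
    have hnpos : (0 : ℝ) < n := by exact_mod_cast hn1
    have hn2m : ((n : ℝ) ^ 2) ≤ m := by exact_mod_cast hle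
    have hn2pos : (0 : ℝ) < (n : ℝ) ^ 2 := by positivity
    have h1 : |S m| ≤ |S (n ^ 2)| + 2 * n := by
      calc |S m| = |S (n ^ 2) + ∑ k ∈ Finset.Ioc (n ^ 2) m, a k| := by rw [hsplit]
        _ ≤ |S (n ^ 2)| + |∑ k ∈ Finset.Ioc (n ^ 2) m, a k| := abs_add_le _ _
        _ ≤ |S (n ^ 2)| + 2 * n := by linarith
    rw [abs_div, abs_of_pos hmpos]
    calc |S m| / (m : ℝ) ≤ (|S (n ^ 2)| + 2 * n) / (m : ℝ) := by
          gcongr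
      _ ≤ (|S (n ^ 2)| + 2 * n) / ((n : ℝ) ^ 2) := by
          apply div_le_div_of_nonneg_left _ hn2pos hn2m
          positivity
      _ = |S (n ^ 2)| / ((n : ℝ) ^ 2) + 2 / n := by
          field_simp
  have hb : Tendsto (fun m : ℕ => |S (Nat.sqrt m ^ 2)| / ((Nat.sqrt m : ℝ) ^ 2)
      + 2 / (Nat.sqrt m : ℝ)) atTop (𝓝 0) := by
    have h1 : Tendsto (fun n : ℕ => |S (n ^ 2)| / ((n : ℝ) ^ 2)) atTop (𝓝 0) := by
      have := h.abs
      simpa [abs_div] using this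
    have h2 : Tendsto (fun n : ℕ => 2 / (n : ℝ)) atTop (𝓝 0) :=
      tendsto_const_div_atTop_nhds_zero_nat 2
    have := ((h1.comp nat_sqrt_tendsto).add (h2.comp nat_sqrt_tendsto))
    simpa using this
  refine squeeze_zero_norm' ?_ hb
  filter_upwards [eventually_ge_atTop 1] with m hm
  rw [Real.norm_eq_abs]
  exact key m hm

/-- If events `Aₙ` are adapted to a filtration `(ℱₙ)` and satisfy
`P(Aₙ ∣ ℱ_{n-1}) ≥ p > 0` a.s. for every `n ≥ 1`, then a.s.
`liminf (1/n) ∑_{k=1}^n 1_{A_k} ≥ p`. -/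
theorem liminf_freq_of_cond_prob_bound
    {Ω : Type*} {m0 : MeasurableSpace Ω} (μ : Measure Ω) [IsProbabilityMeasure μ]
    (ℱ : Filtration ℕ m0) (A : ℕ → Set Ω)
    (hA : ∀ n, MeasurableSet[ℱ n] (A n))
    (p : ℝ) (hp : 0 < p)
    (hcond : ∀ n, 1 ≤ n →
      ∀ᵐ ω ∂μ, p ≤ (μ[(A n).indicator (fun _ => (1 : ℝ))|ℱ (n - 1)]) ω) :
    ∀ᵐ ω ∂μ, p ≤
      Filter.liminf
        (fun n : ℕ => (∑ k ∈ Finset.Icc 1 n, (A k).indicator (fun _ => (1 : ℝ)) ω) / n)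
        atTop := by
  classical
  set f : ℕ → Ω → ℝ := fun k => (A k).indicator (fun _ => (1 : ℝ)) with hfdef
  set g : ℕ → Ω → ℝ := fun k => μ[f k|ℱ (k - 1)] with hgdef
  set Z : ℕ → Ω → ℝ := fun k ω => f k ω - g k ω with hZdef
  set S : ℕ → Ω → ℝ := fun n ω => ∑ k ∈ Finset.Icc 1 n, Z k ω with hSdef
  have hf0 : ∀ k ω, 0 ≤ f k ω := fun k ω => Set.indicator_nonneg (fun _ _ => zero_le_one) ω
  have hf1 : ∀ k ω, f k ω ≤ 1 := fun k ω => Set.indicator_le' (fun _ _ => le_rfl) (fun _ _ => zero_le_one) ω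
  have hfmeas : ∀ k, StronglyMeasurable[ℱ k] (f k) :=
    fun k => stronglyMeasurable_const.indicator (hA k)
  have hfint : ∀ k, Integrable (f k) μ :=
    fun k => (integrable_const (1 : ℝ)).indicator ((ℱ.le k) _ (hA k))
  have hgsm : ∀ k, StronglyMeasurable[ℱ (k - 1)] (g k) := fun k => stronglyMeasurable_condExp
  have hgint : ∀ k, Integrable (g k) μ := fun k => integrable_condExp
  have hg0 : ∀ k, 0 ≤ᵐ[μ] g k := fun k => condExp_nonneg (Filter.Eventually.of_forall (hf0 k))
  have hg1 : ∀ k, g k ≤ᵐ[μ] fun _ => (1 : ℝ) := by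
    intro k
    have h1 := condExp_mono (μ := μ) (m := ℱ (k - 1)) (hfint k) (integrable_const (1 : ℝ))
      (Filter.Eventually.of_forall (hf1 k))
    have h2 : μ[(fun _ => (1 : ℝ))|ℱ (k - 1)] = fun _ => (1 : ℝ) :=
      condExp_const (ℱ.le _) 1
    rw [h2] at h1
    exact h1
  have hZint : ∀ k, Integrable (Z k) μ := fun k => (hfint k).sub (hgint k)
  have hZb : ∀ k, ∀ᵐ ω ∂μ, |Z k ω| ≤ 1 := by
    intro k
    filter_upwards [hg0 k, hg1 k] with ω h0 h1
    simp only [Pi.zero_apply] at h0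
    have h2 := hf0 k ω; have h3 := hf1 k ω
    rw [abs_le]
    constructor
    · show -1 ≤ f k ω - g k ω; linarith
    · show f k ω - g k ω ≤ 1; linarith
  have hZsm : ∀ k, StronglyMeasurable[ℱ k] (Z k) :=
    fun k => (hfmeas k).sub ((hgsm k).mono (ℱ.mono (Nat.sub_le k 1)))
  have hcondZ : ∀ k, μ[Z k|ℱ (k - 1)] =ᵐ[μ] 0 := by
    intro k
    have h1 : μ[Z k|ℱ (k - 1)] =ᵐ[μ] μ[f k|ℱ (k - 1)] - μ[g k|ℱ (k - 1)] :=
      condExp_sub (hfint k) (hgint k) _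
    have h2 : μ[g k|ℱ (k - 1)] = g k :=
      condExp_of_stronglyMeasurable (ℱ.le _) (hgsm k) (hgint k)
    refine h1.trans ?_
    rw [h2]
    filter_upwards with ω
    simp [hgdef]
  have hprod_int : ∀ j k, Integrable (fun ω => Z j ω * Z k ω) μ := by
    intro j k
    refine Integrable.bdd_mul (c := 1) (hZint k)
      (((hZsm j).mono (ℱ.le j)).aestronglyMeasurable) ?_
    filter_upwards [hZb j] with ω h
    simpa [Real.norm_eq_abs] using h
  have horth : ∀ j k, j < k → ∫ ω, Z j ω * Z k ω ∂μ = 0 := by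
    intro j k hjk
    have hm : ℱ (k - 1) ≤ m0 := ℱ.le _
    have hZj : StronglyMeasurable[ℱ (k - 1)] (Z j) := (hZsm j).mono (ℱ.mono (by omega))
    have hpull : μ[fun ω => Z j ω * Z k ω|ℱ (k - 1)]
        =ᵐ[μ] fun ω => Z j ω * (μ[Z k|ℱ (k - 1)]) ω :=
      condExp_mul_of_stronglyMeasurable_left hZj (hprod_int j k) (hZint k)
    have h0 : μ[fun ω => Z j ω * Z k ω|ℱ (k - 1)] =ᵐ[μ] 0 := by
      refine hpull.trans ?_
      filter_upwards [hcondZ k] with ω hω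
      simp [hω]
    calc ∫ ω, Z j ω * Z k ω ∂μ
        = ∫ ω, (μ[fun ω => Z j ω * Z k ω|ℱ (k - 1)]) ω ∂μ :=
          (integral_condExp hm).symm
      _ = 0 := by rw [integral_congr_ae h0]; simp
  have hvar : ∀ n : ℕ, ∫ ω, (S n ω) ^ 2 ∂μ ≤ n := by
    intro n
    have hexp : ∀ ω, (S n ω) ^ 2
        = ∑ j ∈ Finset.Icc 1 n, ∑ k ∈ Finset.Icc 1 n, Z j ω * Z k ω := by
      intro ω; rw [sq, hSdef]; exact Finset.sum_mul_sum _ _ _ _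
    calc ∫ ω, (S n ω) ^ 2 ∂μ
        = ∑ j ∈ Finset.Icc 1 n, ∑ k ∈ Finset.Icc 1 n, ∫ ω, Z j ω * Z k ω ∂μ := by
          simp_rw [hexp]
          rw [integral_finset_sum _ (fun j _ =>
            integrable_finset_sum _ (fun k _ => hprod_int j k))]
          exact Finset.sum_congr rfl fun j _ =>
            integral_finset_sum _ (fun k _ => hprod_int j k)
      _ ≤ ∑ _j ∈ Finset.Icc 1 n, (1 : ℝ) := by
          refine Finset.sum_le_sum fun j hj => ?_
          rw [Finset.sum_eq_single_of_mem j hj (fun k _ hkj => ?_)]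
          · have hb : ∀ᵐ ω ∂μ, Z j ω * Z j ω ≤ 1 := by
              filter_upwards [hZb j] with ω h
              nlinarith [abs_nonneg (Z j ω), le_abs_self (Z j ω * Z j ω), abs_mul (Z j ω) (Z j ω)]
            calc ∫ ω, Z j ω * Z j ω ∂μ ≤ ∫ _ω, (1 : ℝ) ∂μ :=
                  integral_mono_ae (hprod_int j j) (integrable_const 1) hb
              _ = 1 := by simp
          · rcases lt_or_gt_of_ne hkj with h | h
            · calc ∫ ω, Z j ω * Z k ω ∂μ = ∫ ω, Z k ω * Z j ω ∂μ := by
                    simp_rw [mul_comm]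
                _ = 0 := horth k j h
            · exact horth j k h
      _ = n := by simp
  have hSmeas : ∀ n, AEStronglyMeasurable (S n) μ := by
    intro n
    exact (Finset.stronglyMeasurable_fun_sum _
      fun k _ => (hZsm k).mono (ℱ.le k)).aestronglyMeasurable
  -- Borel--Cantelli along squares
  have hsq : ∀ᵐ ω ∂μ, ∀ j : ℕ, ∀ᶠ n in atTop,
      |S ((n + 1) ^ 2) ω| / (((n + 1 : ℕ) : ℝ) ^ 2) < 1 / ((j : ℝ) + 1) := by
    rw [ae_all_iff]
    intro j
    set ε : ℝ := 1 / ((j : ℝ) + 1) with hε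
    have hεpos : 0 < ε := by positivity
    set D : ℕ → Set Ω := fun n =>
      {ω | ε ≤ |S ((n + 1) ^ 2) ω| / (((n + 1 : ℕ) : ℝ) ^ 2)} with hD
    have hDbound : ∀ n : ℕ, μ (D n)
        ≤ ENNReal.ofReal (1 / (ε ^ 2 * ((n + 1 : ℕ) : ℝ) ^ 2)) := by
      intro n
      set N : ℕ := (n + 1) ^ 2 with hN
      have hNpos : (0 : ℝ) < ((n + 1 : ℕ) : ℝ) ^ 2 := by positivity
      have hNcast : ((N : ℕ) : ℝ) = ((n + 1 : ℕ) : ℝ) ^ 2 := by push_cast [hN]; ring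
      have hc : (0 : ℝ) < (ε * ((n + 1 : ℕ) : ℝ) ^ 2) ^ 2 := by positivity
      have hFint : Integrable (fun ω => (S N ω) ^ 2) μ := by
        have h1 : Integrable (fun ω =>
            ∑ a ∈ Finset.Icc 1 N, ∑ b ∈ Finset.Icc 1 N, Z a ω * Z b ω) μ :=
          integrable_finset_sum _ (fun a _ => integrable_finset_sum _ (fun b _ => hprod_int a b))
        refine h1.congr (Filter.Eventually.of_forall fun ω => ?_)
        dsimp only
        rw [sq, hSdef]
        exact (Finset.sum_mul_sum _ _ _ _).symm
      have hcheb := mul_meas_ge_le_integral_of_nonneg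
        (Filter.Eventually.of_forall fun ω => sq_nonneg (S N ω)) hFint
        ((ε * ((n + 1 : ℕ) : ℝ) ^ 2) ^ 2)
      have hsub : D n ⊆ {x | (ε * ((n + 1 : ℕ) : ℝ) ^ 2) ^ 2 ≤ (S N x) ^ 2} := by
        intro ω hω
        have h1 : ε ≤ |S N ω| / (((n + 1 : ℕ) : ℝ) ^ 2) := hω
        have h2 : ε * ((n + 1 : ℕ) : ℝ) ^ 2 ≤ |S N ω| := by
          rw [le_div_iff₀ hNpos] at h1; exact h1
        have h3 : (ε * ((n + 1 : ℕ) : ℝ) ^ 2) ^ 2 ≤ |S N ω| ^ 2 := by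
          have := mul_self_le_mul_self (by positivity) h2
          simpa [sq] using this
        simpa [sq_abs] using h3
      have hfin : μ (D n) ≠ ⊤ := measure_ne_top μ _
      have hfin2 : μ {x | (ε * ((n + 1 : ℕ) : ℝ) ^ 2) ^ 2 ≤ (S N x) ^ 2} ≠ ⊤ :=
        measure_ne_top μ _
      have hmono : μ (D n) ≤ μ {x | (ε * ((n + 1 : ℕ) : ℝ) ^ 2) ^ 2 ≤ (S N x) ^ 2} :=
        measure_mono hsub
      have htoReal : (μ (D n)).toReal
          ≤ (μ {x | (ε * ((n + 1 : ℕ) : ℝ) ^ 2) ^ 2 ≤ (S N x) ^ 2}).toReal :=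
        ENNReal.toReal_mono hfin2 hmono
      have hvarN : ∫ ω, (S N ω) ^ 2 ∂μ ≤ ((n + 1 : ℕ) : ℝ) ^ 2 := by
        have := hvar N
        calc ∫ ω, (S N ω) ^ 2 ∂μ ≤ (N : ℝ) := this
          _ = ((n + 1 : ℕ) : ℝ) ^ 2 := hNcast
      have key : (μ (D n)).toReal ≤ 1 / (ε ^ 2 * ((n + 1 : ℕ) : ℝ) ^ 2) := by
        have h4 : (ε * ((n + 1 : ℕ) : ℝ) ^ 2) ^ 2 * (μ (D n)).toReal
            ≤ ((n + 1 : ℕ) : ℝ) ^ 2 := by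
          calc (ε * ((n + 1 : ℕ) : ℝ) ^ 2) ^ 2 * (μ (D n)).toReal
              ≤ (ε * ((n + 1 : ℕ) : ℝ) ^ 2) ^ 2
                * (μ {x | (ε * ((n + 1 : ℕ) : ℝ) ^ 2) ^ 2 ≤ (S N x) ^ 2}).toReal :=
                mul_le_mul_of_nonneg_left htoReal hc.le
            _ ≤ ∫ ω, (S N ω) ^ 2 ∂μ := hcheb
            _ ≤ ((n + 1 : ℕ) : ℝ) ^ 2 := hvarN
        have hc' : (0 : ℝ) < ε ^ 2 * ((n + 1 : ℕ) : ℝ) ^ 2 := by positivity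
        rw [le_div_iff₀ hc', ← mul_le_mul_iff_left₀ hNpos]
        nlinarith [h4]
      calc μ (D n) = ENNReal.ofReal (μ (D n)).toReal := (ENNReal.ofReal_toReal hfin).symm
        _ ≤ ENNReal.ofReal (1 / (ε ^ 2 * ((n + 1 : ℕ) : ℝ) ^ 2)) :=
            ENNReal.ofReal_le_ofReal key
    -- summability of the bounds
    have hsummable : Summable (fun n : ℕ => 1 / (ε ^ 2 * ((n + 1 : ℕ) : ℝ) ^ 2)) := by
      have h1 : Summable (fun n : ℕ => 1 / ((n : ℝ)) ^ 2) := by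
        simpa using Real.summable_one_div_nat_pow.2 (by norm_num : 1 < 2)
      have h2 : Summable (fun n : ℕ => 1 / (((n + 1 : ℕ) : ℝ)) ^ 2) := h1.comp_injective (add_left_injective 1) |>.congr ?_
      · have := h2.mul_left (1 / ε ^ 2)
        refine this.congr fun n => ?_
        field_simp
      · intro n; rfl
    have htsum : (∑' n, μ (D n)) ≠ ⊤ := by
      have h1 : (∑' n, μ (D n)) ≤ ∑' n, ENNReal.ofReal (1 / (ε ^ 2 * ((n + 1 : ℕ) : ℝ) ^ 2)) :=
        ENNReal.tsum_le_tsum hDbound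
      have h2 : (∑' n, ENNReal.ofReal (1 / (ε ^ 2 * ((n + 1 : ℕ) : ℝ) ^ 2))) ≠ ⊤ := by
        rw [← ENNReal.ofReal_tsum_of_nonneg (fun n => by positivity) hsummable]
        exact ENNReal.ofReal_ne_top
      exact ne_top_of_le_ne_top h2 h1
    filter_upwards [ae_eventually_notMem htsum] with ω hω
    filter_upwards [hω] with n hn
    exact not_le.mp hn
  -- a.e. bound on |Z|
  have hZball : ∀ᵐ ω ∂μ, ∀ k, |Z k ω| ≤ 1 := ae_all_iff.2 hZb
  have hgpall : ∀ᵐ ω ∂μ, ∀ k, 1 ≤ k → p ≤ g k ω := by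
    rw [ae_all_iff]
    intro k
    rcases Nat.eq_zero_or_pos k with hk | hk
    · subst hk; filter_upwards with ω h; exact absurd h (by omega)
    · filter_upwards [hcond k hk] with ω h _
      exact h
  filter_upwards [hsq, hZball, hgpall] with ω hsqω hZω hgω
  -- tendsto along squares
  have htendsq : Tendsto (fun n : ℕ => S (n ^ 2) ω / ((n : ℝ) ^ 2)) atTop (𝓝 0) := by
    rw [NormedAddCommGroup.tendsto_nhds_zero]
    intro δ hδ
    obtain ⟨j, hj⟩ := exists_nat_one_div_lt hδ
    obtain ⟨n0, hn0⟩ := eventually_atTop.1 (hsqω j)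
    rw [eventually_atTop]
    refine ⟨n0 + 1, fun m hm => ?_⟩
    have hm1 : 1 ≤ m := le_trans (Nat.le_add_left 1 n0) hm
    have := hn0 (m - 1) (by omega)
    have hmeq : m - 1 + 1 = m := by omega
    rw [hmeq] at this
    have heq : ‖S (m ^ 2) ω / ((m : ℝ) ^ 2)‖ = |S (m ^ 2) ω| / (((m : ℕ) : ℝ) ^ 2) := by
      have habs : |((m : ℝ)) ^ 2| = ((m : ℝ)) ^ 2 := abs_of_nonneg (by positivity)
      rw [Real.norm_eq_abs, abs_div, habs]
    rw [heq]
    exact lt_trans this hj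
  -- tendsto of S n / n
  have htend : Tendsto (fun n : ℕ => S n ω / (n : ℝ)) atTop (𝓝 0) := by
    refine interp_aux (fun k => Z k ω) (fun k _ => hZω k) ?_
    exact htendsq
  -- final liminf computation
  set x : ℕ → ℝ := fun n => (∑ k ∈ Finset.Icc 1 n, f k ω) / n with hx
  have hxev : ∀ᶠ n in atTop, p + S n ω / (n : ℝ) ≤ x n := by
    filter_upwards [eventually_ge_atTop 1] with n hn
    have hnpos : (0 : ℝ) < n := by exact_mod_cast hn
    have hsum : ∑ k ∈ Finset.Icc 1 n, f k ω = S n ω + ∑ k ∈ Finset.Icc 1 n, g k ω := by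
      rw [hSdef, ← Finset.sum_add_distrib]
      exact Finset.sum_congr rfl fun k _ => by simp [hZdef]
    have hgsum : (n : ℝ) * p ≤ ∑ k ∈ Finset.Icc 1 n, g k ω := by
      calc (n : ℝ) * p = ∑ _k ∈ Finset.Icc 1 n, p := by
            simp [mul_comm]
        _ ≤ ∑ k ∈ Finset.Icc 1 n, g k ω :=
            Finset.sum_le_sum fun k hk => hgω k (Finset.mem_Icc.1 hk).1
    rw [hx]
    dsimp only
    rw [hsum, add_div]
    have : p ≤ (∑ k ∈ Finset.Icc 1 n, g k ω) / n := by
      rw [le_div_iff₀ hnpos]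
      linarith [hgsum]
    linarith
  have hu : Tendsto (fun n : ℕ => p + S n ω / (n : ℝ)) atTop (𝓝 p) := by
    have h := (tendsto_const_nhds (x := p) (f := atTop (α := ℕ))).add htend
    simpa using h
  have hxub : Filter.IsBoundedUnder (· ≤ ·) atTop x := by
    refine Filter.isBoundedUnder_of ⟨1, fun n => ?_⟩
    rcases Nat.eq_zero_or_pos n with hn | hn
    · subst hn; simp [hx]
    · have hnpos : (0 : ℝ) < n := by exact_mod_cast hn
      rw [hx]
      dsimp only
      rw [div_le_one hnpos]
      calc ∑ k ∈ Finset.Icc 1 n, f k ω ≤ ∑ _k ∈ Finset.Icc 1 n, (1 : ℝ) :=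
            Finset.sum_le_sum fun k _ => hf1 k ω
        _ = n := by simp
  have hulb : Filter.IsBoundedUnder (· ≥ ·) atTop (fun n : ℕ => p + S n ω / (n : ℝ)) :=
    hu.isBoundedUnder_ge
  calc p = Filter.liminf (fun n : ℕ => p + S n ω / (n : ℝ)) atTop := hu.liminf_eq.symm
    _ ≤ Filter.liminf x atTop :=
        Filter.liminf_le_liminf hxev hulb hxub.isCoboundedUnder_ge
end

section
/- Let G be a connected graph with spectral radius ρ := ρ(G) < 1, let n ≥ 2, ε > 0, and L > 2e². For simple random walk X on G started at a fixed vertex, the probability that the number of times t ∈ [1,n] lying inside some traversed cycle of length greater than L within X restricted to [1,n] is at least εn, is bounded by e^{(6n/L)·log L} · ρ^{εn/3}/(1-ρ). -/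
/-- A multigraph given by oriented edges with tail, head, and an edge-reversal
involution (loops are edges with `rev e = e`). -/
structure Multigraph (V E : Type) where
  tail : E → V
  head : E → V
  rev : E → E
  rev_rev : ∀ e, rev (rev e) = e
  head_rev : ∀ e, head (rev e) = tail e
  tail_rev : ∀ e, tail (rev e) = head e

namespace Multigraph

variable {V E : Type} (G : Multigraph V E)

/-- `σ` is a path: consecutive edges are adjacent. -/
def IsPath {n : ℕ} (σ : Fin n → E) : Prop :=
  ∀ (i : Fin n) (h : i.1 + 1 < n), G.head (σ i) = G.tail (σ ⟨i.1 + 1, h⟩)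

/-- The path `σ` starts at `x`. -/
def StartsAt {n : ℕ} (σ : Fin n → E) (x : V) : Prop :=
  ∀ h : 0 < n, G.tail (σ ⟨0, h⟩) = x

/-- The path `σ` ends at `x`. -/
def EndsAt {n : ℕ} (σ : Fin n → E) (x : V) : Prop :=
  ∀ h : 0 < n, G.head (σ ⟨n - 1, Nat.sub_lt h Nat.one_pos⟩) = x

/-- `σ` is a cycle based at `x`. -/
def IsCycleAt {n : ℕ} (σ : Fin n → E) (x : V) : Prop :=
  G.IsPath σ ∧ G.StartsAt σ x ∧ G.EndsAt σ x

/-- `σ` is non-backtracking: no edge is immediately followed by its reversal. -/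
def NonBacktracking {n : ℕ} (σ : Fin n → E) : Prop :=
  ∀ (i : Fin n) (h : i.1 + 1 < n), σ ⟨i.1 + 1, h⟩ ≠ G.rev (σ i)

/-- `σ` is fully non-backtracking (as a cycle): it is a single loop, or its first
edge is not the reversal of its last edge. -/
def FullyNB {n : ℕ} (σ : Fin n → E) : Prop :=
  n = 1 ∨ ∀ h : 0 < n, σ ⟨0, h⟩ ≠ G.rev (σ ⟨n - 1, Nat.sub_lt h Nat.one_pos⟩)

/-- The number of `n`-step paths from `x` to `y`. -/
noncomputable def pathCount (n : ℕ) (x y : V) : ℕ :=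
  Nat.card {σ : Fin n → E // G.IsPath σ ∧ G.StartsAt σ x ∧ G.EndsAt σ y}

/-- The number of `n`-step cycles based at `x`. -/
noncomputable def cycleCount (n : ℕ) (x : V) : ℕ := G.pathCount n x x

/-- `bₙ(x)`: the number of non-backtracking cycles of length `n` at `x`. -/
noncomputable def nbCycleCount (n : ℕ) (x : V) : ℕ :=
  Nat.card {σ : Fin n → E // G.IsCycleAt σ x ∧ G.NonBacktracking σ}

/-- `b*ₙ(x)`: the number of fully non-backtracking cycles of length `n` at `x`. -/
noncomputable def fnbCycleCount (n : ℕ) (x : V) : ℕ :=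
  Nat.card {σ : Fin n → E // G.IsCycleAt σ x ∧ G.NonBacktracking σ ∧ G.FullyNB σ}

/-- `G` is `d`-regular: every vertex has exactly `d` outgoing edges. -/
def IsRegular (d : ℕ) : Prop := ∀ v : V, Nat.card {e : E // G.tail e = v} = d

/-- `G` is connected. -/
def Connected : Prop :=
  ∀ x y : V, x ≠ y → ∃ n : ℕ, 1 ≤ n ∧ ∃ σ : Fin n → E,
    G.IsPath σ ∧ G.StartsAt σ x ∧ G.EndsAt σ y

/-- `G` is vertex-transitive. -/
def IsTransitive : Prop :=
  ∀ x y : V, ∃ (φ : V ≃ V) (ψ : E ≃ E),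
    (∀ e, G.tail (ψ e) = φ (G.tail e)) ∧ (∀ e, G.head (ψ e) = φ (G.head e)) ∧
    (∀ e, G.rev (ψ e) = ψ (G.rev e)) ∧ φ x = y

/-- The spectral radius `ρ(G) = limsup pₙ(o,o)^{1/n}` of simple random walk on a
`d`-regular multigraph, based at `o`. -/
noncomputable def spectralRadius (d : ℕ) (o : V) : ℝ :=
  Filter.limsup (fun n : ℕ => ((G.cycleCount n o : ℝ) / d ^ n) ^ (1 / (n : ℝ)))
    Filter.atTop

/-- The cogrowth `cogr(G) = limsup bₙ(o)^{1/n}`. -/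
noncomputable def cogrowth (o : V) : ℝ :=
  Filter.limsup (fun n : ℕ => (G.nbCycleCount n o : ℝ) ^ (1 / (n : ℝ))) Filter.atTop

end Multigraph

namespace Multigraph

variable {V E : Type} (G : Multigraph V E)

/-- The (out-)degree of a vertex. -/
noncomputable def degree (v : V) : ℕ := Nat.card {e : E // G.tail e = v}

/-- The probability of a given path under simple random walk. -/
noncomputable def pathWeight {n : ℕ} (σ : Fin n → E) : ℝ :=
  ∏ i : Fin n, ((G.degree (G.tail (σ i)) : ℝ))⁻¹

/-- `t` is an `L⁺`-cycle time of the path `σ`: some segment `(σ_s, …, σ_u)` with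
`s ≤ t ≤ u` is a cycle of length greater than `L`. -/
def IsLongCycleTime {n : ℕ} (σ : Fin n → E) (L : ℝ) (t : Fin n) : Prop :=
  ∃ s u : Fin n, s ≤ t ∧ t ≤ u ∧ G.tail (σ s) = G.head (σ u) ∧
    L < (u.1 : ℝ) - s.1 + 1

end Multigraph

namespace LCT
open scoped Classical ENNReal
open Multigraph

noncomputable def cind (p : Prop) : ℝ≥0∞ := if p then 1 else 0

lemma cind_true {p : Prop} (h : p) : cind p = 1 := if_pos h
lemma cind_false {p : Prop} (h : ¬p) : cind p = 0 := if_neg h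
lemma cind_congr {p q : Prop} (h : p ↔ q) : cind p = cind q := by
  by_cases hp : p
  · rw [cind_true hp, cind_true (h.mp hp)]
  · rw [cind_false hp, cind_false (fun hq => hp (h.mpr hq))]
lemma cind_and (p q : Prop) : cind (p ∧ q) = cind p * cind q := by
  by_cases hp : p <;> by_cases hq : q <;> simp [cind, hp, hq]
lemma cind_le_one (p : Prop) : cind p ≤ 1 := by
  by_cases hp : p <;> simp [cind, hp]
lemma cind_mono {p q : Prop} (h : p → q) : cind p ≤ cind q := by
  by_cases hp : p
  · rw [cind_true hp, cind_true (h hp)]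
  · rw [cind_false hp]; exact zero_le

variable {V E : Type} (G : Multigraph V E)

lemma pathWeight_nonneg {n : ℕ} (σ : Fin n → E) : 0 ≤ G.pathWeight σ := by
  unfold Multigraph.pathWeight
  exact Finset.prod_nonneg fun i _ => inv_nonneg.mpr (Nat.cast_nonneg _)

noncomputable def W {n : ℕ} (σ : Fin n → E) : ℝ≥0∞ := ENNReal.ofReal (G.pathWeight σ)

lemma W_ne_top {n : ℕ} (σ : Fin n → E) : W G σ ≠ ⊤ := ENNReal.ofReal_ne_top

noncomputable def PS (n : ℕ) (x : V) (C : Set (Fin n → E)) : ℝ≥0∞ :=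
  ∑' σ : Fin n → E, cind (G.IsPath σ ∧ G.StartsAt σ x ∧ σ ∈ C) * W G σ

lemma W_zero (σ : Fin 0 → E) : W G σ = 1 := by
  unfold W Multigraph.pathWeight
  simp

section Cons

variable {a : ℕ}

def ccons (e : E) (σ : Fin a → E) : Fin (a+1) → E := Fin.cons e σ

@[simp] lemma ccons_mk_zero (e : E) (σ : Fin a → E) (h : 0 < a + 1) :
    ccons e σ ⟨0, h⟩ = e := rfl

@[simp] lemma ccons_zero (e : E) (σ : Fin a → E) :
    ccons e σ 0 = e := rfl

@[simp] lemma ccons_mk_succ (e : E) (σ : Fin a → E) (j : ℕ) (h : j + 1 < a + 1) :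
    ccons e σ ⟨j + 1, h⟩ = σ ⟨j, Nat.lt_of_succ_lt_succ h⟩ := by
  show (Fin.cons e σ : Fin (a+1) → E) ⟨j + 1, h⟩ = _
  have h2 : (⟨j + 1, h⟩ : Fin (a+1)) = Fin.succ ⟨j, Nat.lt_of_succ_lt_succ h⟩ := rfl
  rw [h2, Fin.cons_succ]

lemma W_cons (e : E) (σ : Fin a → E) :
    W G (ccons e σ) = ENNReal.ofReal ((G.degree (G.tail e) : ℝ))⁻¹ * W G σ := by
  unfold W Multigraph.pathWeight ccons
  rw [← ENNReal.ofReal_mul (by positivity)]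
  congr 1
  rw [Fin.prod_univ_succ]
  simp

lemma cons_decomp (x : V) (e : E) (σ : Fin a → E) :
    (G.IsPath (ccons e σ) ∧ G.StartsAt (ccons e σ) x) ↔
      (G.tail e = x ∧ G.IsPath σ ∧ G.StartsAt σ (G.head e)) := by
  constructor
  · rintro ⟨hp, hs⟩
    refine ⟨?_, ?_, ?_⟩
    · have := hs (Nat.succ_pos a)
      simpa using this
    · intro i h
      have h2 : (i.1 + 1) + 1 < a + 1 := by omega
      have := hp ⟨i.1 + 1, by omega⟩ h2
      simpa using this
    · intro h
      have h1 : (0:ℕ) + 1 < a + 1 := by omega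
      have := hp ⟨0, by omega⟩ h1
      simp only [ccons_mk_zero, ccons_mk_succ] at this
      exact this.symm
  · rintro ⟨ht, hp, hs⟩
    constructor
    · rintro ⟨i, hi⟩ h
      rcases i with _ | j
      · have h0 : (0:ℕ) + 1 < a + 1 := h
        have ha : 0 < a := by omega
        simp only [ccons_mk_zero, ccons_mk_succ]
        exact (hs ha).symm
      · have h'' : j + 1 + 1 < a + 1 := h
        have hj2 : j + 1 < a := by omega
        simp only [ccons_mk_succ]
        exact hp ⟨j, by omega⟩ hj2
    · intro h
      exact ht

end Cons

lemma step_mass (hdeg : ∀ v : V, 0 < G.degree v) (x : V) :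
    ∑' e : E, cind (G.tail e = x) * (G.degree (G.tail e) : ℝ≥0∞)⁻¹ = 1 := by
  set s : Set E := {e : E | G.tail e = x} with hs
  set g : E → ℝ≥0∞ := fun e => cind (G.tail e = x) * (G.degree (G.tail e) : ℝ≥0∞)⁻¹ with hg
  have hsupp : Function.support g ⊆ s := by
    intro e he
    show G.tail e = x
    by_contra hne
    exact he (by simp only [hg, cind_false hne, zero_mul])
  rw [← tsum_subtype_eq_of_support_subset hsupp]
  have hfin : Finite {e : E // G.tail e = x} := by
    have := hdeg x
    unfold Multigraph.degree at this
    exact (Nat.card_pos_iff.mp this).2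
  haveI : Finite ↥s := hfin
  haveI : Fintype ↥s := Fintype.ofFinite _
  rw [tsum_fintype]
  have hval : ∀ e : ↥s, g e.1 = (G.degree x : ℝ≥0∞)⁻¹ := by
    rintro ⟨e, he⟩
    have he' : G.tail e = x := he
    show cind (G.tail e = x) * (G.degree (G.tail e) : ℝ≥0∞)⁻¹ = _
    rw [cind_true he', he', one_mul]
  rw [Finset.sum_congr rfl (fun e _ => hval e), Finset.sum_const, Finset.card_univ]
  have hcard : (Fintype.card ↥s) = G.degree x := by
    rw [← Nat.card_eq_fintype_card]
    rfl
  rw [hcard, nsmul_eq_mul]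
  exact ENNReal.mul_inv_cancel (by exact_mod_cast (hdeg x).ne') (ENNReal.natCast_ne_top _)

lemma mass (hdeg : ∀ v : V, 0 < G.degree v) :
    ∀ (a : ℕ) (x : V), PS G a x Set.univ = 1 := by
  intro a
  induction a with
  | zero =>
    intro x
    unfold PS
    have hu : ∀ σ : Fin 0 → E, σ = Fin.elim0 := by
      intro σ; funext i; exact i.elim0
    rw [tsum_eq_single Fin.elim0 (fun b hb => absurd (hu b) hb)]
    rw [cind_true ⟨fun i h => absurd h (by omega), fun h => absurd h (by omega), trivial⟩,
      W_zero, one_mul]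
  | succ a IH =>
    intro x
    unfold PS
    rw [← Equiv.tsum_eq (Fin.consEquiv (fun _ : Fin (a+1) => E))]
    have heq : ∀ p : E × (Fin a → E),
        cind (G.IsPath (Fin.consEquiv (fun _ : Fin (a+1) => E) p) ∧
          G.StartsAt (Fin.consEquiv (fun _ : Fin (a+1) => E) p) x ∧
          (Fin.consEquiv (fun _ : Fin (a+1) => E) p) ∈ Set.univ)
          * W G (Fin.consEquiv (fun _ : Fin (a+1) => E) p) =
        (cind (G.tail p.1 = x) * ENNReal.ofReal ((G.degree (G.tail p.1) : ℝ))⁻¹) *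
          (cind (G.IsPath p.2 ∧ G.StartsAt p.2 (G.head p.1) ∧ p.2 ∈ Set.univ) * W G p.2) := by
      rintro ⟨e, σ⟩
      have hee : (Fin.consEquiv (fun _ : Fin (a+1) => E)) (e, σ) = ccons e σ := rfl
      rw [hee, W_cons]
      have hc : (G.IsPath (ccons e σ) ∧ G.StartsAt (ccons e σ) x ∧
          (ccons e σ) ∈ Set.univ) ↔
          (G.tail e = x ∧ (G.IsPath σ ∧ G.StartsAt σ (G.head e) ∧ σ ∈ Set.univ)) := by
        constructor
        · rintro ⟨h1, h2, _⟩
          obtain ⟨a1, a2, a3⟩ := (cons_decomp G x e σ).mp ⟨h1, h2⟩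
          exact ⟨a1, a2, a3, trivial⟩
        · rintro ⟨h1, h2, h3, _⟩
          obtain ⟨b1, b2⟩ := (cons_decomp G x e σ).mpr ⟨h1, h2, h3⟩
          exact ⟨b1, b2, trivial⟩
      rw [cind_congr hc, cind_and]
      ring
    simp only [heq]
    rw [ENNReal.tsum_prod']
    have hinner : ∀ e : E,
        ∑' σ : Fin a → E, (cind (G.tail e = x) * ENNReal.ofReal ((G.degree (G.tail e) : ℝ))⁻¹) *
          (cind (G.IsPath σ ∧ G.StartsAt σ (G.head e) ∧ σ ∈ Set.univ) * W G σ) =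
        (cind (G.tail e = x) * ENNReal.ofReal ((G.degree (G.tail e) : ℝ))⁻¹) := by
      intro e
      rw [ENNReal.tsum_mul_left]
      have : ∑' σ : Fin a → E, cind (G.IsPath σ ∧ G.StartsAt σ (G.head e) ∧ σ ∈ Set.univ)
          * W G σ = 1 := IH (G.head e)
      rw [this, mul_one]
    simp only [hinner]
    have hofReal : ∀ e : E, ENNReal.ofReal ((G.degree (G.tail e) : ℝ))⁻¹ =
        (G.degree (G.tail e) : ℝ≥0∞)⁻¹ := by
      intro e
      rw [ENNReal.ofReal_inv_of_pos (by exact_mod_cast hdeg _)]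
      congr 1
      exact ENNReal.ofReal_natCast _
    simp only [hofReal]
    exact step_mass G hdeg x

end LCT
namespace LCT
open scoped Classical ENNReal
open Multigraph

variable {V E : Type} (G : Multigraph V E)

section Split

variable {n a : ℕ}

def take (h : a ≤ n) (σ : Fin n → E) : Fin a → E := fun i => σ ⟨i.1, by omega⟩

def drop (h : a ≤ n) (σ : Fin n → E) : Fin (n - a) → E := fun i => σ ⟨a + i.1, by omega⟩

def endv (x : V) {a : ℕ} (α : Fin a → E) : V :=
  if h : 0 < a then G.head (α ⟨a - 1, by omega⟩) else x

@[simp] lemma take_apply (h : a ≤ n) (σ : Fin n → E) (i : Fin a) :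
    take h σ i = σ ⟨i.1, by omega⟩ := rfl

@[simp] lemma drop_apply (h : a ≤ n) (σ : Fin n → E) (i : Fin (n - a)) :
    drop h σ i = σ ⟨a + i.1, by omega⟩ := rfl

lemma prod_split {M : Type} [CommMonoid M] (h : a ≤ n) (f : Fin n → M) :
    ∏ i : Fin n, f i =
      (∏ i : Fin a, f ⟨i.1, by omega⟩) * ∏ i : Fin (n - a), f ⟨a + i.1, by omega⟩ := by
  set g : ℕ → M := fun j => if hj : j < n then f ⟨j, hj⟩ else 1 with hgdef
  have e1 : ∏ i : Fin n, f i = ∏ i ∈ Finset.range n, g i := by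
    rw [← Fin.prod_univ_eq_prod_range]
    refine Finset.prod_congr rfl (fun i _ => ?_)
    show f i = if hj : (i : ℕ) < n then f ⟨(i : ℕ), hj⟩ else 1
    rw [dif_pos i.2]
  have e2 : ∏ i ∈ Finset.range n, g i = ∏ i ∈ Finset.range (a + (n - a)), g i := by
    have : n = a + (n - a) := by omega
    exact congrArg (fun m => ∏ i ∈ Finset.range m, g i) this
  have e3 := Finset.prod_range_add g a (n - a)
  have e4 : ∏ i ∈ Finset.range a, g i = ∏ i : Fin a, f ⟨i.1, by omega⟩ := by
    rw [← Fin.prod_univ_eq_prod_range]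
    refine Finset.prod_congr rfl (fun i _ => ?_)
    show (if hj : (i : ℕ) < n then f ⟨(i : ℕ), hj⟩ else 1) = _
    rw [dif_pos (show (i : ℕ) < n by omega)]
  have e5 : ∏ i ∈ Finset.range (n - a), g (a + i) = ∏ i : Fin (n - a), f ⟨a + i.1, by omega⟩ := by
    rw [← Fin.prod_univ_eq_prod_range (fun j => g (a + j))]
    refine Finset.prod_congr rfl (fun i _ => ?_)
    show (if hj : a + (i : ℕ) < n then f ⟨a + (i : ℕ), hj⟩ else 1) = _
    rw [dif_pos (show a + (i : ℕ) < n by omega)]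
  rw [e1, e2, e3, e4, e5]

lemma W_split (h : a ≤ n) (σ : Fin n → E) :
    W G σ = W G (take h σ) * W G (drop h σ) := by
  unfold W
  rw [← ENNReal.ofReal_mul (pathWeight_nonneg _ _)]
  congr 1
  unfold Multigraph.pathWeight
  exact prod_split h _

def glueEquiv (h : a ≤ n) : ((Fin a → E) × (Fin (n - a) → E)) ≃ (Fin n → E) where
  toFun p := fun j => if hj : j.1 < a then p.1 ⟨j.1, hj⟩ else p.2 ⟨j.1 - a, by omega⟩
  invFun σ := (take h σ, drop h σ)
  left_inv := by
    rintro ⟨α, β⟩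
    refine Prod.ext ?_ ?_
    · funext i
      show (if hj : (i : ℕ) < a then α ⟨i.1, hj⟩ else β ⟨i.1 - a, by omega⟩) = α i
      rw [dif_pos i.2]
    · funext i
      show (if hj : a + i.1 < a then α ⟨a + i.1, hj⟩ else β ⟨a + i.1 - a, by omega⟩) = β i
      rw [dif_neg (by omega)]
      congr 1
      exact Fin.ext (by simp)
  right_inv := by
    intro σ
    funext j
    show (if hj : (j : ℕ) < a then σ ⟨j.1, by omega⟩ else σ ⟨a + (j.1 - a), by omega⟩) = σ j
    by_cases hj : (j : ℕ) < a
    · rw [dif_pos hj]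
    · rw [dif_neg hj]
      congr 1
      exact Fin.ext (by simp; omega)

lemma take_glue (h : a ≤ n) (α : Fin a → E) (β : Fin (n - a) → E) :
    take h (glueEquiv h (α, β)) = α := congrArg Prod.fst ((glueEquiv h).left_inv (α, β))

lemma drop_glue (h : a ≤ n) (α : Fin a → E) (β : Fin (n - a) → E) :
    drop h (glueEquiv h (α, β)) = β := congrArg Prod.snd ((glueEquiv h).left_inv (α, β))

lemma path_split (h : a ≤ n) (x : V) (σ : Fin n → E) :
    (G.IsPath σ ∧ G.StartsAt σ x) ↔
      ((G.IsPath (take h σ) ∧ G.StartsAt (take h σ) x) ∧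
       (G.IsPath (drop h σ) ∧ G.StartsAt (drop h σ) (endv G x (take h σ)))) := by
  constructor
  · rintro ⟨hp, hs⟩
    refine ⟨⟨?_, ?_⟩, ?_, ?_⟩
    · intro i hi
      exact hp ⟨i.1, by omega⟩ (show i.1 + 1 < n by omega)
    · intro h0
      exact hs (by omega)
    · intro i hi
      exact hp ⟨a + i.1, by omega⟩ (show a + i.1 + 1 < n by omega)
    · intro h0
      unfold endv
      by_cases ha : 0 < a
      · rw [dif_pos ha]
        have hlt : a - 1 + 1 < n := by omega
        have := hp ⟨a - 1, by omega⟩ hlt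
        have hidx : (⟨a - 1 + 1, hlt⟩ : Fin n) = ⟨a + 0, by omega⟩ := Fin.ext (by simp; omega)
        rw [hidx] at this
        exact this.symm
      · have ha0 : a = 0 := by omega
        subst ha0
        rw [dif_neg ha]
        exact hs (by omega)
  · rintro ⟨⟨hpa, hsa⟩, hpb, hsb⟩
    constructor
    · intro i hi
      rcases lt_trichotomy (i.1 + 1) a with hlt | heq | hgt
      · exact hpa ⟨i.1, by omega⟩ (show i.1 + 1 < a from hlt)
      · have h0 : 0 < n - a := by omega
        have hgoal := hsb h0
        unfold endv at hgoal
        rw [dif_pos (show 0 < a by omega)] at hgoal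
        simp only [take_apply, drop_apply] at hgoal
        have e1 : (⟨a + (0:ℕ), by omega⟩ : Fin n) = ⟨i.1 + 1, hi⟩ := Fin.ext (by simp; omega)
        have e2 : (⟨a - 1, by omega⟩ : Fin n) = i := Fin.ext (by simp; omega)
        rw [e1, e2] at hgoal
        exact hgoal.symm
      · have := hpb ⟨i.1 - a, by omega⟩ (show i.1 - a + 1 < n - a by omega)
        simp only [drop_apply] at this
        have e1 : (⟨a + (i.1 - a), by omega⟩ : Fin n) = i := Fin.ext (by simp; omega)
        have e2 : (⟨a + (i.1 - a + 1), by omega⟩ : Fin n) = ⟨i.1 + 1, hi⟩ :=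
          Fin.ext (by simp; omega)
        rw [e1, e2] at this
        exact this
    · intro h0
      by_cases ha : 0 < a
      · exact hsa ha
      · have ha0 : a = 0 := by omega
        subst ha0
        have h0' : 0 < n - 0 := by omega
        have := hsb h0'
        unfold endv at this
        rw [dif_neg ha] at this
        exact this

lemma split_eq (h : a ≤ n) (x : V) (A : Set (Fin a → E)) (B : Set (Fin (n - a) → E)) :
    PS G n x {σ | take h σ ∈ A ∧ drop h σ ∈ B} =
      ∑' α : Fin a → E, (cind (G.IsPath α ∧ G.StartsAt α x ∧ α ∈ A) * W G α) *
        PS G (n - a) (endv G x α) B := by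
  unfold PS
  rw [← Equiv.tsum_eq (glueEquiv (E := E) h)]
  rw [ENNReal.tsum_prod']
  apply tsum_congr
  intro α
  have hsum : ∀ β : Fin (n - a) → E,
      cind (G.IsPath (glueEquiv h (α, β)) ∧ G.StartsAt (glueEquiv h (α, β)) x ∧
          (glueEquiv h (α, β)) ∈ {σ | take h σ ∈ A ∧ drop h σ ∈ B}) * W G (glueEquiv h (α, β)) =
      (cind (G.IsPath α ∧ G.StartsAt α x ∧ α ∈ A) * W G α) *
        (cind (G.IsPath β ∧ G.StartsAt β (endv G x α) ∧ β ∈ B) * W G β) := by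
    intro β
    have hW : W G (glueEquiv h (α, β)) = W G α * W G β := by
      rw [W_split G h (glueEquiv h (α, β)), take_glue, drop_glue]
    have hiff : (G.IsPath (glueEquiv h (α, β)) ∧ G.StartsAt (glueEquiv h (α, β)) x ∧
        (glueEquiv h (α, β)) ∈ {σ | take h σ ∈ A ∧ drop h σ ∈ B}) ↔
        ((G.IsPath α ∧ G.StartsAt α x ∧ α ∈ A) ∧
         (G.IsPath β ∧ G.StartsAt β (endv G x α) ∧ β ∈ B)) := by
      have hps := path_split G h x (glueEquiv h (α, β))
      rw [take_glue, drop_glue] at hps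
      have hmem : (glueEquiv h (α, β)) ∈ {σ | take h σ ∈ A ∧ drop h σ ∈ B} ↔
          (α ∈ A ∧ β ∈ B) := by
        show (take h (glueEquiv h (α, β)) ∈ A ∧ drop h (glueEquiv h (α, β)) ∈ B) ↔ _
        rw [take_glue, drop_glue]
      constructor
      · rintro ⟨h1, h2, h3⟩
        obtain ⟨⟨a1, a2⟩, b1, b2⟩ := hps.mp ⟨h1, h2⟩
        obtain ⟨m1, m2⟩ := hmem.mp h3
        exact ⟨⟨a1, a2, m1⟩, ⟨b1, b2, m2⟩⟩
      · rintro ⟨⟨a1, a2, m1⟩, b1, b2, m2⟩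
        obtain ⟨h1, h2⟩ := hps.mpr ⟨⟨a1, a2⟩, b1, b2⟩
        exact ⟨h1, h2, hmem.mpr ⟨m1, m2⟩⟩
    rw [cind_congr hiff, cind_and, hW]
    ring
  simp only [hsum]
  rw [ENNReal.tsum_mul_left]

end Split

def cycSet (c : ℕ) : Set (Fin c → E) :=
  {γ | ∀ h : 0 < c, G.head (γ ⟨c - 1, Nat.sub_lt h Nat.one_pos⟩) = G.tail (γ ⟨0, h⟩)}

lemma PS_mono {n : ℕ} (x : V) {C D : Set (Fin n → E)} (h : C ⊆ D) :
    PS G n x C ≤ PS G n x D := by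
  unfold PS
  exact ENNReal.tsum_le_tsum fun σ =>
    mul_le_mul_left (cind_mono (fun ⟨h1, h2, h3⟩ => ⟨h1, h2, h h3⟩)) _

lemma PS_ne_top (hdeg : ∀ v : V, 0 < G.degree v) {n : ℕ} (x : V) (C : Set (Fin n → E)) :
    PS G n x C ≠ ⊤ := by
  have h1 : PS G n x C ≤ PS G n x Set.univ := PS_mono G x (Set.subset_univ C)
  rw [mass G hdeg n x] at h1
  exact (h1.trans_lt ENNReal.one_lt_top).ne

set_option maxHeartbeats 1000000 in
lemma cycle_bound {ρ : ℝ} (hdeg : ∀ v : V, 0 < G.degree v) (hρ0 : 0 ≤ ρ)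
    (hret : ∀ (x : V) (k : ℕ), 1 ≤ k →
      ∑' σ : {σ : Fin k → E // G.IsCycleAt σ x}, G.pathWeight σ.1 ≤ ρ ^ k)
    (y : V) (c : ℕ) (hc : 1 ≤ c) :
    PS G c y (cycSet G c) ≤ ENNReal.ofReal ρ ^ c := by
  have hiff : ∀ γ : Fin c → E,
      (G.IsPath γ ∧ G.StartsAt γ y ∧ γ ∈ cycSet G c) ↔ G.IsCycleAt γ y := by
    intro γ
    unfold Multigraph.IsCycleAt Multigraph.EndsAt cycSet
    constructor
    · rintro ⟨h1, h2, h3⟩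
      exact ⟨h1, h2, fun h => (h3 h).trans (h2 h)⟩
    · rintro ⟨h1, h2, h3⟩
      exact ⟨h1, h2, fun h => (h3 h).trans (h2 h).symm⟩
  have hsub : ∑' γ : {γ : Fin c → E // G.IsCycleAt γ y}, W G γ.1
      = ∑' σ : Fin c → E, Set.indicator {γ : Fin c → E | G.IsCycleAt γ y} (W G) σ :=
    tsum_subtype {γ : Fin c → E | G.IsCycleAt γ y} (W G)
  have hrw : PS G c y (cycSet G c) =
      ∑' γ : {γ : Fin c → E // G.IsCycleAt γ y}, W G γ.1 := by
    rw [hsub]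
    unfold PS
    apply tsum_congr
    intro γ
    rw [cind_congr (hiff γ)]
    by_cases hγ : G.IsCycleAt γ y
    · rw [cind_true hγ,
        Set.indicator_of_mem (show γ ∈ {γ : Fin c → E | G.IsCycleAt γ y} from hγ) (W G), one_mul]
    · rw [cind_false hγ,
        Set.indicator_of_notMem (show γ ∉ {γ : Fin c → E | G.IsCycleAt γ y} from hγ) (W G),
        zero_mul]
  have hne : (∑' γ : {γ : Fin c → E // G.IsCycleAt γ y}, W G γ.1) ≠ ⊤ := by
    rw [← hrw]
    exact PS_ne_top G hdeg y _
  have hsummable : Summable (fun γ : {γ : Fin c → E // G.IsCycleAt γ y} =>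
      G.pathWeight γ.1) := by
    have := ENNReal.summable_toReal hne
    refine this.congr (fun γ => ?_)
    unfold W
    exact ENNReal.toReal_ofReal (pathWeight_nonneg G γ.1)
  rw [hrw]
  have heq : ∑' γ : {γ : Fin c → E // G.IsCycleAt γ y}, W G γ.1 =
      ENNReal.ofReal (∑' γ : {γ : Fin c → E // G.IsCycleAt γ y}, G.pathWeight γ.1) := by
    exact (ENNReal.ofReal_tsum_of_nonneg
      (f := fun γ : {γ : Fin c → E // G.IsCycleAt γ y} => G.pathWeight γ.1)
      (fun γ => pathWeight_nonneg G γ.1) hsummable).symm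
  calc ∑' γ : {γ : Fin c → E // G.IsCycleAt γ y}, W G γ.1
      = ENNReal.ofReal (∑' γ : {γ : Fin c → E // G.IsCycleAt γ y}, G.pathWeight γ.1) := heq
    _ ≤ ENNReal.ofReal (ρ ^ c) := ENNReal.ofReal_le_ofReal (hret y c hc)
    _ = ENNReal.ofReal ρ ^ c := ENNReal.ofReal_pow hρ0 c

end LCT
namespace LCT
open scoped Classical ENNReal
open Multigraph

def lenF : List (ℕ × ℕ) → ℕ
  | [] => 0
  | p :: r => (p.2 - p.1 + 1) + lenF r

@[simp] lemma lenF_nil : lenF [] = 0 := rfl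
@[simp] lemma lenF_cons (p : ℕ × ℕ) (r : List (ℕ × ℕ)) :
    lenF (p :: r) = (p.2 - p.1 + 1) + lenF r := rfl

def shiftF (d : ℕ) : List (ℕ × ℕ) → List (ℕ × ℕ) :=
  List.map (fun p => (p.1 - d, p.2 - d))

@[simp] lemma shiftF_nil (d : ℕ) : shiftF d [] = [] := rfl
@[simp] lemma shiftF_cons (d : ℕ) (q : ℕ × ℕ) (r : List (ℕ × ℕ)) :
    shiftF d (q :: r) = (q.1 - d, q.2 - d) :: shiftF d r := rfl

def ValidF (n : ℕ) : ℕ → List (ℕ × ℕ) → Prop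
  | _, [] => True
  | m, p :: r => m ≤ p.1 ∧ p.1 ≤ p.2 ∧ p.2 < n ∧ ValidF n (p.2 + 1) r

@[simp] lemma ValidF_nil (n m : ℕ) : ValidF n m [] := trivial
@[simp] lemma ValidF_cons (n m : ℕ) (p : ℕ × ℕ) (r : List (ℕ × ℕ)) :
    ValidF n m (p :: r) ↔ (m ≤ p.1 ∧ p.1 ≤ p.2 ∧ p.2 < n ∧ ValidF n (p.2 + 1) r) :=
  Iff.rfl

lemma valid_entries {n : ℕ} : ∀ {l : List (ℕ × ℕ)} {m : ℕ}, ValidF n m l →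
    ∀ p ∈ l, m ≤ p.1 ∧ p.1 ≤ p.2 ∧ p.2 < n := by
  intro l
  induction l with
  | nil => intro m _ p hp; exact absurd hp (List.not_mem_nil)
  | cons q r IH =>
    intro m hv p hp
    obtain ⟨h1, h2, h3, h4⟩ := hv
    rcases List.mem_cons.mp hp with rfl | hp'
    · exact ⟨h1, h2, h3⟩
    · obtain ⟨a1, a2, a3⟩ := IH h4 p hp'
      exact ⟨by omega, a2, a3⟩

lemma valid_shift {n : ℕ} : ∀ {l : List (ℕ × ℕ)} {m d : ℕ}, ValidF n m l → d ≤ m →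
    ValidF (n - d) (m - d) (shiftF d l) := by
  intro l
  induction l with
  | nil => intro m d _ _; exact trivial
  | cons q r IH =>
    intro m d hv hd
    obtain ⟨h1, h2, h3, h4⟩ := hv
    rw [shiftF_cons]
    refine ⟨by omega, by omega, by omega, ?_⟩
    have := IH h4 (show d ≤ q.2 + 1 by omega)
    have he : q.2 + 1 - d = (q.2 - d) + 1 := by omega
    rw [he] at this
    exact this

lemma lenF_shift {n : ℕ} : ∀ {l : List (ℕ × ℕ)} {m d : ℕ}, ValidF n m l → d ≤ m →
    lenF (shiftF d l) = lenF l := by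
  intro l
  induction l with
  | nil => intro m d _ _; rfl
  | cons q r IH =>
    intro m d hv hd
    obtain ⟨h1, h2, h3, h4⟩ := hv
    show (q.2 - d - (q.1 - d) + 1) + lenF (shiftF d r) = _
    rw [IH h4 (show d ≤ q.2 + 1 by omega)]
    have : q.2 - d - (q.1 - d) = q.2 - q.1 := by omega
    rw [this]
    exact (lenF_cons q r).symm

lemma lenF_le_sub {n : ℕ} : ∀ {l : List (ℕ × ℕ)} {m : ℕ}, ValidF n m l →
    lenF l ≤ n - m := by
  intro l
  induction l with
  | nil => intro m _; simp
  | cons q r IH =>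
    intro m hv
    obtain ⟨h1, h2, h3, h4⟩ := hv
    have := IH h4
    simp only [lenF_cons]
    omega

variable {V E : Type} (G : Multigraph V E)

def Cst (n : ℕ) (l : List (ℕ × ℕ)) (σ : Fin n → E) : Prop :=
  ∀ p ∈ l, ∀ (hs : p.1 < n) (hu : p.2 < n), G.tail (σ ⟨p.1, hs⟩) = G.head (σ ⟨p.2, hu⟩)

lemma main_bound {ρ : ℝ} (hdeg : ∀ v : V, 0 < G.degree v) (hρ0 : 0 ≤ ρ)
    (hret : ∀ (x : V) (k : ℕ), 1 ≤ k →
      ∑' σ : {σ : Fin k → E // G.IsCycleAt σ x}, G.pathWeight σ.1 ≤ ρ ^ k) :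
    ∀ (l : List (ℕ × ℕ)) (n : ℕ) (x : V), ValidF n 0 l →
      PS G n x {σ | Cst G n l σ} ≤ ENNReal.ofReal ρ ^ (lenF l) := by
  suffices key : ∀ (N : ℕ) (l : List (ℕ × ℕ)), l.length ≤ N → ∀ (n : ℕ) (x : V), ValidF n 0 l →
      PS G n x {σ | Cst G n l σ} ≤ ENNReal.ofReal ρ ^ (lenF l) by
    intro l
    exact key l.length l le_rfl
  intro N
  induction N with
  | zero =>
    intro l hlen n x _
    have hl : l = [] := List.length_eq_zero_iff.mp (by omega)
    subst hl
    have h1 : PS G n x {σ | Cst G n [] σ} ≤ PS G n x Set.univ :=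
      PS_mono G x (Set.subset_univ _)
    rw [mass G hdeg n x] at h1
    simpa using h1
  | succ N IHN =>
    rintro (_ | ⟨p, r⟩) hlen n x hv
    · have h1 : PS G n x {σ | Cst G n [] σ} ≤ PS G n x Set.univ :=
        PS_mono G x (Set.subset_univ _)
      rw [mass G hdeg n x] at h1
      simpa using h1
    obtain ⟨hm0, hsu, hun, hvr⟩ := hv
    have h1 : p.2 + 1 ≤ n := hun
    have hent := valid_entries hvr
    set c : ℕ := (p.2 + 1) - p.1 with hc
    -- the two constraint sets
    set A : Set (Fin (p.2 + 1) → E) :=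
      {α | G.tail (α ⟨p.1, by omega⟩) = G.head (α ⟨p.2, by omega⟩)} with hA
    set B : Set (Fin (n - (p.2 + 1)) → E) :=
      {β | Cst G (n - (p.2 + 1)) (shiftF (p.2 + 1) r) β} with hB
    have step1 : {σ : Fin n → E | Cst G n (p :: r) σ} =
        {σ | take h1 σ ∈ A ∧ drop h1 σ ∈ B} := by
      ext σ
      constructor
      · intro hcst
        constructor
        · show G.tail (take h1 σ ⟨p.1, by omega⟩) = G.head (take h1 σ ⟨p.2, by omega⟩)
          simp only [take_apply]
          exact hcst p (List.mem_cons_self) (by omega) (by omega)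
        · intro q hq hs' hu'
          obtain ⟨p', hp', hqe⟩ := List.mem_map.mp hq
          obtain ⟨hb1, hb2, hb3⟩ := hent p' hp'
          subst hqe
          simp only [drop_apply]
          have e1 : (⟨p.2 + 1 + (p'.1 - (p.2 + 1)), by omega⟩ : Fin n) = ⟨p'.1, by omega⟩ :=
            Fin.ext (by simp; omega)
          have e2 : (⟨p.2 + 1 + (p'.2 - (p.2 + 1)), by omega⟩ : Fin n) = ⟨p'.2, by omega⟩ :=
            Fin.ext (by simp; omega)
          rw [e1, e2]
          exact hcst p' (List.mem_cons_of_mem p hp') (by omega) (by omega)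
      · rintro ⟨hA', hB'⟩
        intro q hq hs' hu'
        rcases List.mem_cons.mp hq with rfl | hq'
        · have := hA'
          simp only [hA, Set.mem_setOf_eq, take_apply] at this
          exact this
        · obtain ⟨hb1, hb2, hb3⟩ := hent q hq'
          have hmem : (q.1 - (p.2 + 1), q.2 - (p.2 + 1)) ∈ shiftF (p.2 + 1) r :=
            List.mem_map.mpr ⟨q, hq', rfl⟩
          have := hB' (q.1 - (p.2 + 1), q.2 - (p.2 + 1)) hmem (by omega) (by omega)
          simp only [drop_apply] at this
          have e1 : (⟨p.2 + 1 + (q.1 - (p.2 + 1)), by omega⟩ : Fin n) = ⟨q.1, hs'⟩ :=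
            Fin.ext (by simp; omega)
          have e2 : (⟨p.2 + 1 + (q.2 - (p.2 + 1)), by omega⟩ : Fin n) = ⟨q.2, hu'⟩ :=
            Fin.ext (by simp; omega)
          rw [e1, e2] at this
          exact this
    -- bound on the B part
    have hBbound : ∀ y : V, PS G (n - (p.2 + 1)) y B ≤ ENNReal.ofReal ρ ^ lenF r := by
      intro y
      have hv' : ValidF (n - (p.2 + 1)) 0 (shiftF (p.2 + 1) r) := by
        have := valid_shift hvr (le_refl (p.2 + 1))
        rwa [Nat.sub_self] at this
      have hlen' : (shiftF (p.2 + 1) r).length ≤ N := by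
        have : (shiftF (p.2 + 1) r).length = r.length := List.length_map _
        simp only [List.length_cons] at hlen
        omega
      have := IHN (shiftF (p.2 + 1) r) hlen' (n - (p.2 + 1)) y hv'
      rwa [lenF_shift hvr (le_refl (p.2 + 1))] at this
    -- bound on the A part
    have hs2 : p.1 ≤ p.2 + 1 := by omega
    have hAbound : PS G (p.2 + 1) x A ≤ ENNReal.ofReal ρ ^ c := by
      have step2 : A = {α : Fin (p.2 + 1) → E |
          take hs2 α ∈ (Set.univ : Set (Fin p.1 → E)) ∧
          drop hs2 α ∈ cycSet G (p.2 + 1 - p.1)} := by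
        ext α
        simp only [hA, Set.mem_setOf_eq, Set.mem_univ, true_and]
        unfold cycSet
        constructor
        · intro hcyc h0
          simp only [drop_apply]
          have e1 : (⟨p.1 + (p.2 + 1 - p.1 - 1), by omega⟩ : Fin (p.2 + 1)) =
              ⟨p.2, by omega⟩ := Fin.ext (by simp; omega)
          have e2 : (⟨p.1 + (0:ℕ), by omega⟩ : Fin (p.2 + 1)) = ⟨p.1, by omega⟩ :=
            Fin.ext (by simp)
          rw [e1, e2]
          exact hcyc.symm
        · intro hcyc
          have := hcyc (by omega)
          simp only [drop_apply] at this
          have e1 : (⟨p.1 + (p.2 + 1 - p.1 - 1), by omega⟩ : Fin (p.2 + 1)) =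
              ⟨p.2, by omega⟩ := Fin.ext (by simp; omega)
          have e2 : (⟨p.1 + (0:ℕ), by omega⟩ : Fin (p.2 + 1)) = ⟨p.1, by omega⟩ :=
            Fin.ext (by simp)
          rw [e1, e2] at this
          exact this.symm
      rw [step2, split_eq G hs2 x Set.univ (cycSet G (p.2 + 1 - p.1))]
      have hb : ∀ α : Fin p.1 → E,
          (cind (G.IsPath α ∧ G.StartsAt α x ∧ α ∈ Set.univ) * W G α) *
            PS G (p.2 + 1 - p.1) (endv G x α) (cycSet G (p.2 + 1 - p.1)) ≤
          (cind (G.IsPath α ∧ G.StartsAt α x ∧ α ∈ Set.univ) * W G α) *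
            ENNReal.ofReal ρ ^ c := by
        intro α
        exact mul_le_mul_right
          (cycle_bound G hdeg hρ0 hret (endv G x α) (p.2 + 1 - p.1) (by omega)) _
      calc ∑' α : Fin p.1 → E, (cind (G.IsPath α ∧ G.StartsAt α x ∧ α ∈ Set.univ) * W G α) *
            PS G (p.2 + 1 - p.1) (endv G x α) (cycSet G (p.2 + 1 - p.1))
          ≤ ∑' α : Fin p.1 → E, (cind (G.IsPath α ∧ G.StartsAt α x ∧ α ∈ Set.univ) * W G α) *
            ENNReal.ofReal ρ ^ c := ENNReal.tsum_le_tsum hb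
        _ = (∑' α : Fin p.1 → E, cind (G.IsPath α ∧ G.StartsAt α x ∧ α ∈ Set.univ) * W G α) *
            ENNReal.ofReal ρ ^ c := ENNReal.tsum_mul_right
        _ = PS G p.1 x Set.univ * ENNReal.ofReal ρ ^ c := rfl
        _ = ENNReal.ofReal ρ ^ c := by rw [mass G hdeg p.1 x, one_mul]
    -- combine
    show PS G n x {σ | Cst G n (p :: r) σ} ≤ _
    rw [step1, split_eq G h1 x A B]
    have hb : ∀ α : Fin (p.2 + 1) → E,
        (cind (G.IsPath α ∧ G.StartsAt α x ∧ α ∈ A) * W G α) *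
          PS G (n - (p.2 + 1)) (endv G x α) B ≤
        (cind (G.IsPath α ∧ G.StartsAt α x ∧ α ∈ A) * W G α) *
          ENNReal.ofReal ρ ^ lenF r := fun α => mul_le_mul_right (hBbound _) _
    calc ∑' α : Fin (p.2 + 1) → E, (cind (G.IsPath α ∧ G.StartsAt α x ∧ α ∈ A) * W G α) *
          PS G (n - (p.2 + 1)) (endv G x α) B
        ≤ ∑' α : Fin (p.2 + 1) → E, (cind (G.IsPath α ∧ G.StartsAt α x ∧ α ∈ A) * W G α) *
          ENNReal.ofReal ρ ^ lenF r := ENNReal.tsum_le_tsum hb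
      _ = (∑' α : Fin (p.2 + 1) → E, cind (G.IsPath α ∧ G.StartsAt α x ∧ α ∈ A) * W G α) *
          ENNReal.ofReal ρ ^ lenF r := ENNReal.tsum_mul_right
      _ = PS G (p.2 + 1) x A * ENNReal.ofReal ρ ^ lenF r := rfl
      _ ≤ ENNReal.ofReal ρ ^ c * ENNReal.ofReal ρ ^ lenF r := mul_le_mul_left hAbound _
      _ = ENNReal.ofReal ρ ^ lenF (p :: r) := by
          rw [← pow_add]
          congr 1
          simp only [lenF_cons]
          omega

end LCT
namespace LCT
open scoped Classical

lemma lenF_append : ∀ (a b : List (ℕ × ℕ)), lenF (a ++ b) = lenF a + lenF b := by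
  intro a b
  induction a with
  | nil => simp
  | cons p r IH =>
    show (p.2 - p.1 + 1) + lenF (r ++ b) = _
    rw [IH, lenF_cons]
    omega

lemma vitali : ∀ (N : ℕ) (T : Finset ℕ) (f : ℕ → ℕ × ℕ), T.card ≤ N →
    (∀ t ∈ T, (f t).1 ≤ t ∧ t ≤ (f t).2) →
    ∃ l : List (ℕ × ℕ), (∀ p ∈ l, ∃ t ∈ T, f t = p) ∧
      List.Chain' (fun p q => p.2 < q.1) l ∧ T.card ≤ 3 * lenF l := by
  intro N
  induction N with
  | zero =>
    intro T f hc _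
    exact ⟨[], by simp, List.isChain_nil, by simpa using hc⟩
  | succ N IH =>
    intro T f hcard hT
    rcases T.eq_empty_or_nonempty with rfl | hne
    · exact ⟨[], by simp, List.isChain_nil, by simp⟩
    obtain ⟨t0, ht0, hmax⟩ := T.exists_max_image (fun t => (f t).2 - (f t).1) hne
    obtain ⟨hs0, hu0⟩ := hT t0 ht0
    set s0 := (f t0).1 with hs0def
    set u0 := (f t0).2 with hu0def
    set TL := T.filter (fun t => (f t).2 < s0) with hTL
    set TR := T.filter (fun t => u0 < (f t).1) with hTR
    have ht0L : t0 ∉ TL := by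
      rw [hTL, Finset.mem_filter]
      rintro ⟨-, h⟩
      omega
    have ht0R : t0 ∉ TR := by
      rw [hTR, Finset.mem_filter]
      rintro ⟨-, h⟩
      omega
    have hTLcard : TL.card ≤ N := by
      have : TL ⊂ T := Finset.ssubset_iff_of_subset (Finset.filter_subset _ _) |>.mpr
        ⟨t0, ht0, ht0L⟩
      have := Finset.card_lt_card this
      omega
    have hTRcard : TR.card ≤ N := by
      have : TR ⊂ T := Finset.ssubset_iff_of_subset (Finset.filter_subset _ _) |>.mpr
        ⟨t0, ht0, ht0R⟩
      have := Finset.card_lt_card this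
      omega
    obtain ⟨lL, hLsrc, hLchain, hLcount⟩ := IH TL f hTLcard
      (fun t ht => hT t (Finset.mem_filter.mp ht).1)
    obtain ⟨lR, hRsrc, hRchain, hRcount⟩ := IH TR f hTRcard
      (fun t ht => hT t (Finset.mem_filter.mp ht).1)
    refine ⟨lL ++ (s0, u0) :: lR, ?_, ?_, ?_⟩
    · intro p hp
      rcases List.mem_append.mp hp with h | h
      · obtain ⟨t, ht, hfe⟩ := hLsrc p h
        exact ⟨t, (Finset.mem_filter.mp ht).1, hfe⟩
      · rcases List.mem_cons.mp h with rfl | h'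
        · exact ⟨t0, ht0, rfl⟩
        · obtain ⟨t, ht, hfe⟩ := hRsrc p h'
          exact ⟨t, (Finset.mem_filter.mp ht).1, hfe⟩
    · refine List.IsChain.append hLchain ?_ ?_
      · refine List.isChain_cons.mpr ⟨?_, hRchain⟩
        intro q hq
        obtain ⟨t, ht, hfe⟩ := hRsrc q (List.mem_of_mem_head? hq)
        have := (Finset.mem_filter.mp ht).2
        rw [hfe] at this
        exact this
      · intro x hx y hy
        have hxl : x ∈ lL := List.mem_of_mem_getLast? hx
        obtain ⟨t, ht, hfe⟩ := hLsrc x hxl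
        have hxlt := (Finset.mem_filter.mp ht).2
        rw [hfe] at hxlt
        have hy' : y = (s0, u0) := by
          simp only [List.head?_cons, Option.mem_def, Option.some.injEq] at hy
          exact hy.symm
        rw [hy']
        exact hxlt
    · set TM := T.filter (fun t => ¬((f t).2 < s0) ∧ ¬(u0 < (f t).1)) with hTM
      have hcover : T ⊆ TL ∪ TM ∪ TR := by
        intro t ht
        by_cases h1 : (f t).2 < s0
        · exact Finset.mem_union_left _ (Finset.mem_union_left _
            (Finset.mem_filter.mpr ⟨ht, h1⟩))
        by_cases h2 : u0 < (f t).1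
        · exact Finset.mem_union_right _ (Finset.mem_filter.mpr ⟨ht, h2⟩)
        · exact Finset.mem_union_left _ (Finset.mem_union_right _
            (Finset.mem_filter.mpr ⟨ht, h1, h2⟩))
      have hTMsub : TM ⊆ Finset.Icc (s0 + 1 - (u0 - s0 + 1)) (u0 + (u0 - s0 + 1) - 1) := by
        intro t ht
        obtain ⟨htT, hq1, hq2⟩ := Finset.mem_filter.mp ht
        obtain ⟨ha1, ha2⟩ := hT t htT
        have hm := hmax t htT
        rw [Finset.mem_Icc]
        omega
      have hTMcard : TM.card ≤ 3 * (u0 - s0 + 1) := by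
        have h1 := Finset.card_le_card hTMsub
        rw [Nat.card_Icc] at h1
        omega
      have hunion : T.card ≤ TL.card + TM.card + TR.card := by
        have h1 := Finset.card_le_card hcover
        have h2 := Finset.card_union_le (TL ∪ TM) TR
        have h3 := Finset.card_union_le TL TM
        omega
      rw [lenF_append, lenF_cons]
      omega

def flatF : List (ℕ × ℕ) → List ℕ
  | [] => []
  | p :: r => p.1 :: p.2 :: flatF r

@[simp] lemma flatF_nil : flatF [] = [] := rfl
@[simp] lemma flatF_cons (p : ℕ × ℕ) (r : List (ℕ × ℕ)) :
    flatF (p :: r) = p.1 :: p.2 :: flatF r := rfl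

def pairup : List ℕ → List (ℕ × ℕ)
  | a :: b :: rest => (a, b) :: pairup rest
  | _ => []

noncomputable def decode (A : Finset ℕ) : List (ℕ × ℕ) := pairup (A.sort (· ≤ ·))

lemma flatF_length : ∀ l : List (ℕ × ℕ), (flatF l).length = 2 * l.length := by
  intro l
  induction l with
  | nil => rfl
  | cons p r IH => simp [IH]; omega

lemma flatF_mem {l : List (ℕ × ℕ)} {p : ℕ × ℕ} (hp : p ∈ l) :
    p.1 ∈ flatF l ∧ p.2 ∈ flatF l := by
  induction l with
  | nil => exact absurd hp (List.not_mem_nil)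
  | cons q r IH =>
    rcases List.mem_cons.mp hp with rfl | h
    · constructor <;> simp
    · obtain ⟨h1, h2⟩ := IH h
      constructor <;> simp [h1, h2]

lemma mem_flatF : ∀ {l : List (ℕ × ℕ)} {y : ℕ}, y ∈ flatF l → ∃ p ∈ l, y = p.1 ∨ y = p.2 := by
  intro l
  induction l with
  | nil => intro y hy; simp at hy
  | cons q r IH =>
    intro y hy
    rw [flatF_cons] at hy
    rcases List.mem_cons.mp hy with rfl | hy'
    · exact ⟨q, List.mem_cons_self, Or.inl rfl⟩
    rcases List.mem_cons.mp hy' with rfl | hy''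
    · exact ⟨q, List.mem_cons_self, Or.inr rfl⟩
    · obtain ⟨p, hp, hor⟩ := IH hy''
      exact ⟨p, List.mem_cons_of_mem q hp, hor⟩

lemma lenF_lb {L : ℝ} (hL0 : 0 ≤ L) : ∀ l : List (ℕ × ℕ),
    (∀ p ∈ l, p.1 ≤ p.2 ∧ L < (p.2 : ℝ) - (p.1 : ℝ) + 1) →
    L * l.length ≤ (lenF l : ℝ) := by
  intro l
  induction l with
  | nil => intro _; simp
  | cons p r IH =>
    intro h
    have hp := h p (List.mem_cons_self)
    have hr := IH (fun q hq => h q (List.mem_cons_of_mem p hq))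
    rw [lenF_cons, List.length_cons]
    push_cast [hp.1]
    push_cast at hr
    nlinarith [hp.2, hr]

lemma flatF_chain {l : List (ℕ × ℕ)} (hch : List.Chain' (fun p q => p.2 < q.1) l)
    (hlt : ∀ p ∈ l, p.1 < p.2) : List.Chain' (· < ·) (flatF l) := by
  induction l with
  | nil => exact List.isChain_nil
  | cons p r IH =>
    rw [flatF_cons, List.Chain', List.isChain_cons_cons]
    refine ⟨hlt p (List.mem_cons_self), ?_⟩
    rw [List.isChain_cons]
    refine ⟨?_, IH (List.isChain_cons.mp hch).2 (fun q hq => hlt q (List.mem_cons_of_mem p hq))⟩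
    intro y hy
    cases r with
    | nil => simp at hy
    | cons q r' =>
      have hy' : y = q.1 := by
        simp only [flatF_cons, List.head?_cons, Option.mem_def, Option.some.injEq] at hy
        exact hy.symm
      rw [hy']
      exact (List.isChain_cons.mp hch).1 q (by simp)

lemma pairup_flatF : ∀ l : List (ℕ × ℕ), pairup (flatF l) = l := by
  intro l
  induction l with
  | nil => rfl
  | cons p r IH =>
    show (p.1, p.2) :: pairup (flatF r) = p :: r
    rw [IH]

lemma decode_flatF {l : List (ℕ × ℕ)} (hch : List.Chain' (fun p q => p.2 < q.1) l)
    (hlt : ∀ p ∈ l, p.1 < p.2) : decode (flatF l).toFinset = l := by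
  have hchain := flatF_chain hch hlt
  have hsorted : (flatF l).Pairwise (· < ·) := List.isChain_iff_pairwise.mp hchain
  have hnodup : (flatF l).Nodup := hsorted.nodup
  have hsorted' : (flatF l).Pairwise (· ≤ ·) := hsorted.imp (fun h => le_of_lt h)
  unfold decode
  rw [(List.toFinset_sort (· ≤ ·) hnodup).mpr hsorted']
  exact pairup_flatF l

lemma chain_valid {n : ℕ} : ∀ (l : List (ℕ × ℕ)) (m : ℕ),
    List.Chain' (fun p q => p.2 < q.1) l →
    (∀ p ∈ l, p.1 ≤ p.2 ∧ p.2 < n) →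
    (∀ q ∈ l.head?, m ≤ q.1) → ValidF n m l := by
  intro l
  induction l with
  | nil => intro m _ _ _; trivial
  | cons p r IH =>
    intro m hch hb hh
    have hp := hb p (List.mem_cons_self)
    refine ⟨hh p (by simp), hp.1, hp.2, ?_⟩
    refine IH (p.2 + 1) (List.isChain_cons.mp hch).2
      (fun q hq => hb q (List.mem_cons_of_mem p hq)) ?_
    intro q hq
    have := (List.isChain_cons.mp hch).1 q hq
    omega

end LCT
namespace LCT
open scoped Classical

lemma count_sum_bound (n : ℕ) (hn : 2 ≤ n) (L : ℝ) (hL : 2 * Real.exp 2 < L) :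
    (∑ j ∈ Finset.range (⌊2 * (n:ℝ) / L⌋₊ + 1), (n.choose j : ℝ)) ≤
      Real.exp ((6 * n / L) * Real.log L) := by
  have hexp2 : (3:ℝ) ≤ Real.exp 2 := by
    have := Real.add_one_le_exp 2
    linarith
  have hL2 : (2:ℝ) < L := by linarith
  have hL0 : (0:ℝ) < L := by linarith
  have hlog2L : (2:ℝ) ≤ Real.log L := by
    rw [Real.le_log_iff_exp_le hL0]
    linarith [Real.exp_pos 2]
  have hlogL0 : (0:ℝ) ≤ Real.log L := by linarith
  have hlog20 : (0:ℝ) < Real.log 2 := Real.log_pos (by norm_num)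
  set x : ℝ := 2 / L with hx
  have hx0 : 0 < x := by positivity
  set m : ℝ := 2 * n / L with hm
  have hm0 : 0 ≤ m := by positivity
  set M : ℕ := ⌊m⌋₊ with hM
  have hMm : (M : ℝ) ≤ m := Nat.floor_le hm0
  have hL2' : (1:ℝ) ≤ L / 2 := (le_div_iff₀ (by norm_num : (0:ℝ) < 2)).mpr (by linarith)
  have hA : ∀ j ∈ Finset.range (M + 1), (n.choose j : ℝ) ≤
      ((n.choose j : ℝ) * x ^ j) * (L / 2) ^ m := by
    intro j hj
    have hjM : j ≤ M := Nat.lt_succ_iff.mp (Finset.mem_range.mp hj)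
    have hjm : (j : ℝ) ≤ m := le_trans (by exact_mod_cast hjM) hMm
    have h1 : ((L / 2) : ℝ) ^ (j : ℝ) ≤ (L / 2) ^ m :=
      Real.rpow_le_rpow_of_exponent_le hL2' hjm
    have h2 : x ^ j * ((L / 2) : ℝ) ^ (j : ℝ) = 1 := by
      rw [Real.rpow_natCast, ← mul_pow]
      have hxl : x * (L / 2) = 1 := by
        rw [hx]
        field_simp
      rw [hxl, one_pow]
    calc (n.choose j : ℝ) = (n.choose j : ℝ) * (x ^ j * (L / 2) ^ (j : ℝ)) := by
          rw [h2, mul_one]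
      _ ≤ (n.choose j : ℝ) * (x ^ j * (L / 2) ^ m) := by
          apply mul_le_mul_of_nonneg_left _ (Nat.cast_nonneg _)
          exact mul_le_mul_of_nonneg_left h1 (pow_nonneg hx0.le j)
      _ = ((n.choose j : ℝ) * x ^ j) * (L / 2) ^ m := by ring
  have hB : (∑ j ∈ Finset.range (M + 1), (n.choose j : ℝ) * x ^ j) ≤ (x + 1) ^ n := by
    have h1 : (∑ j ∈ Finset.range (M + 1), (n.choose j : ℝ) * x ^ j) ≤
        ∑ j ∈ Finset.range (M + n + 1), (n.choose j : ℝ) * x ^ j :=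
      Finset.sum_le_sum_of_subset_of_nonneg (Finset.range_subset_range.mpr (by omega))
        (fun j _ _ => by positivity)
    have h2 : ∑ j ∈ Finset.range (M + n + 1), (n.choose j : ℝ) * x ^ j =
        ∑ j ∈ Finset.range (n + 1), (n.choose j : ℝ) * x ^ j := by
      symm
      apply Finset.sum_subset (Finset.range_subset_range.mpr (by omega))
      intro j _ hj
      have hnj : n < j := by
        simp only [Finset.mem_range] at hj
        omega
      rw [Nat.choose_eq_zero_of_lt hnj]
      simp
    have h3 : (x + 1) ^ n = ∑ j ∈ Finset.range (n + 1), x ^ j * 1 ^ (n - j) *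
        (n.choose j : ℝ) := add_pow x 1 n
    have h4 : ∑ j ∈ Finset.range (n + 1), x ^ j * 1 ^ (n - j) * (n.choose j : ℝ) =
        ∑ j ∈ Finset.range (n + 1), (n.choose j : ℝ) * x ^ j := by
      apply Finset.sum_congr rfl
      intro j _
      ring
    rw [h3, h4]
    rw [h2] at h1
    exact h1
  have hC : (x + 1) ^ n ≤ Real.exp m := by
    have h1 : x + 1 ≤ Real.exp x := Real.add_one_le_exp x
    have h2 : (x + 1) ^ n ≤ (Real.exp x) ^ n :=
      pow_le_pow_left₀ (by positivity) h1 n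
    have h3 : (Real.exp x) ^ n = Real.exp ((n : ℝ) * x) := (Real.exp_nat_mul x n).symm
    have h4 : (n : ℝ) * x = m := by
      rw [hx, hm]
      ring
    rw [h3, h4] at h2
    exact h2
  have hD : (∑ j ∈ Finset.range (M + 1), (n.choose j : ℝ)) ≤
      Real.exp m * (L / 2) ^ m := by
    calc (∑ j ∈ Finset.range (M + 1), (n.choose j : ℝ))
        ≤ ∑ j ∈ Finset.range (M + 1), ((n.choose j : ℝ) * x ^ j) * (L / 2) ^ m :=
          Finset.sum_le_sum hA
      _ = (∑ j ∈ Finset.range (M + 1), (n.choose j : ℝ) * x ^ j) * (L / 2) ^ m :=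
          (Finset.sum_mul _ _ _).symm
      _ ≤ Real.exp m * (L / 2) ^ m := by
          apply mul_le_mul_of_nonneg_right (hB.trans hC)
          exact Real.rpow_nonneg (by linarith) m
  have hE : Real.exp m * (L / 2) ^ m = Real.exp (m + Real.log (L / 2) * m) := by
    rw [Real.rpow_def_of_pos (by linarith : (0:ℝ) < L / 2), ← Real.exp_add]
  have hF : m + Real.log (L / 2) * m ≤ (6 * n / L) * Real.log L := by
    have hld : Real.log (L / 2) = Real.log L - Real.log 2 :=
      Real.log_div (ne_of_gt hL0) two_ne_zero
    have h1 : m + Real.log (L / 2) * m = m * (1 + Real.log L - Real.log 2) := by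
      rw [hld]
      ring
    have h2 : 1 + Real.log L - Real.log 2 ≤ (3 / 2) * Real.log L := by linarith
    have h3 : m * (1 + Real.log L - Real.log 2) ≤ m * ((3 / 2) * Real.log L) :=
      mul_le_mul_of_nonneg_left h2 hm0
    have h4 : m * ((3 / 2) * Real.log L) ≤ (6 * n / L) * Real.log L := by
      have he : (6 * n / L) * Real.log L - m * ((3 / 2) * Real.log L) =
          3 * (((n : ℝ) / L) * Real.log L) := by
        rw [hm]
        field_simp
        ring
      have hnn : (0:ℝ) ≤ ((n : ℝ) / L) * Real.log L :=
        mul_nonneg (by positivity) hlogL0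
      linarith
    linarith
  calc (∑ j ∈ Finset.range (M + 1), (n.choose j : ℝ))
      ≤ Real.exp m * (L / 2) ^ m := hD
    _ = Real.exp (m + Real.log (L / 2) * m) := hE
    _ ≤ Real.exp ((6 * n / L) * Real.log L) := Real.exp_le_exp.mpr hF

end LCT

open scoped Classical ENNReal
open LCT

open Multigraph in
/-- If every return probability satisfies `P_x[cycle of length k] ≤ ρ^k` with
`ρ < 1`, then for `n ≥ 2`, `ε > 0` and `L > 2e²`, the probability that simple random
walk of length `n` from `o` has at least `εn` times lying in traversed cycles of
length `> L` is at most `e^{(6n/L)·log L} · ρ^{εn/3}/(1-ρ)`. -/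
theorem long_cycle_times_bound {V E : Type} (G : Multigraph V E)
    (hdeg : ∀ v : V, 0 < G.degree v) (hconn : G.Connected)
    (ρ : ℝ) (hρ0 : 0 ≤ ρ) (hρ1 : ρ < 1)
    (hret : ∀ (x : V) (k : ℕ), 1 ≤ k →
      ∑' σ : {σ : Fin k → E // G.IsCycleAt σ x}, G.pathWeight σ.1 ≤ ρ ^ k)
    (o : V) (n : ℕ) (hn : 2 ≤ n) (ε : ℝ) (hε : 0 < ε)
    (L : ℝ) (hL : 2 * Real.exp 2 < L) :
    ∑' σ : {σ : Fin n → E // G.IsPath σ ∧ G.StartsAt σ o ∧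
        ε * n ≤ (Nat.card {t : Fin n // G.IsLongCycleTime σ L t} : ℝ)},
      G.pathWeight σ.1 ≤
      Real.exp ((6 * n / L) * Real.log L) * ρ ^ (ε * n / 3 : ℝ) / (1 - ρ) := by
  have hexp2 : (3:ℝ) ≤ Real.exp 2 := by
    have := Real.add_one_le_exp 2
    linarith
  have hL2 : (2:ℝ) < L := by linarith
  have hL0 : (0:ℝ) < L := by linarith
  have hεn : (0:ℝ) < ε * n := by
    have : (0:ℝ) < (n:ℝ) := by positivity
    positivity
  set ρrp : ℝ := ρ ^ (ε * n / 3 : ℝ) with hρrp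
  have hρrp0 : 0 ≤ ρrp := Real.rpow_nonneg hρ0 _
  set P : (Fin n → E) → Prop := fun σ => G.IsPath σ ∧ G.StartsAt σ o ∧
      ε * n ≤ (Nat.card {t : Fin n // G.IsLongCycleTime σ L t} : ℝ) with hP
  set S : Finset (Finset ℕ) := ((Finset.range n).powerset).filter
      (fun A => ((A.card : ℝ) ≤ 2 * n / L ∧ ValidF n 0 (decode A) ∧
        ε * n / 3 ≤ (lenF (decode A) : ℝ))) with hS
  -- Step 1: pointwise covering
  have hcover : ∀ σ : Fin n → E, P σ → ∃ A ∈ S,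
      (G.IsPath σ ∧ G.StartsAt σ o ∧ σ ∈ {σ' : Fin n → E | Cst G n (decode A) σ'}) := by
    intro σ hσ
    obtain ⟨hp, hs, hcount⟩ := hσ
    set T : Finset (Fin n) := Finset.univ.filter (fun t => G.IsLongCycleTime σ L t) with hT
    have hTcard : Nat.card {t : Fin n // G.IsLongCycleTime σ L t} = T.card := by
      rw [Nat.card_eq_fintype_card]
      convert Fintype.card_subtype (fun t : Fin n => G.IsLongCycleTime σ L t) using 2
    set Tn : Finset ℕ := T.image Fin.val with hTn
    have hTncard : Tn.card = T.card := Finset.card_image_of_injective T Fin.val_injective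
    set Pt : ℕ → ℕ × ℕ → Prop := fun t p => p.1 ≤ t ∧ t ≤ p.2 ∧ p.2 < n ∧
      L < (p.2 : ℝ) - (p.1 : ℝ) + 1 ∧
      ∀ (h1 : p.1 < n) (h2 : p.2 < n), G.tail (σ ⟨p.1, h1⟩) = G.head (σ ⟨p.2, h2⟩) with hPt
    have hex : ∀ t ∈ Tn, ∃ p, Pt t p := by
      intro t ht
      obtain ⟨tf, htf, rfl⟩ := Finset.mem_image.mp ht
      have hlct : G.IsLongCycleTime σ L tf := (Finset.mem_filter.mp htf).2
      obtain ⟨s, u, hst, htu, hcst, hlen⟩ := hlct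
      refine ⟨(s.1, u.1), hst, htu, u.2, hlen, ?_⟩
      intro h1 h2
      exact hcst
    set f : ℕ → ℕ × ℕ := fun t => if h : ∃ p, Pt t p then h.choose else (0, 0) with hf
    have hfgood : ∀ t ∈ Tn, Pt t (f t) := by
      intro t ht
      have h := hex t ht
      show Pt t (if h' : ∃ p, Pt t p then h'.choose else (0, 0))
      rw [dif_pos h]
      exact h.choose_spec
    obtain ⟨l, hsrc, hchain, hcount3⟩ := vitali Tn.card Tn f le_rfl
      (fun t ht => ⟨(hfgood t ht).1, (hfgood t ht).2.1⟩)
    have hent : ∀ p ∈ l, p.1 ≤ p.2 ∧ p.2 < n ∧ (L < (p.2 : ℝ) - (p.1 : ℝ) + 1) ∧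
        ∀ (h1 : p.1 < n) (h2 : p.2 < n),
          G.tail (σ ⟨p.1, h1⟩) = G.head (σ ⟨p.2, h2⟩) := by
      intro p hpl
      obtain ⟨t, ht, hfe⟩ := hsrc p hpl
      have := hfgood t ht
      rw [hfe] at this
      exact ⟨by omega, this.2.2.1, this.2.2.2.1, this.2.2.2.2⟩
    have hlt : ∀ p ∈ l, p.1 < p.2 := by
      intro p hpl
      obtain ⟨h1, -, h3, -⟩ := hent p hpl
      have : (p.1 : ℝ) + 1 < (p.2 : ℝ) := by linarith
      exact_mod_cast (by linarith : (p.1 : ℝ) < (p.2 : ℝ))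
    set A : Finset ℕ := (flatF l).toFinset with hA
    have hdec : decode A = l := decode_flatF hchain hlt
    have hvalid : ValidF n 0 l := chain_valid l 0 hchain
      (fun p hpl => ⟨(hent p hpl).1, (hent p hpl).2.1⟩) (fun q _ => Nat.zero_le _)
    have hlenle : lenF l ≤ n := by
      have := lenF_le_sub hvalid
      omega
    have hcard2 : A.card ≤ 2 * l.length := by
      have h1 := List.toFinset_card_le (flatF l)
      rw [flatF_length] at h1
      exact h1
    have hlb : L * l.length ≤ (lenF l : ℝ) := lenF_lb hL0.le l
      (fun p hpl => ⟨(hent p hpl).1, (hent p hpl).2.2.1⟩)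
    have hAS : A ∈ S := by
      rw [hS, Finset.mem_filter]
      refine ⟨Finset.mem_powerset.mpr ?_, ?_, ?_, ?_⟩
      · intro y hy
        obtain ⟨p, hpl, hor⟩ := mem_flatF (List.mem_toFinset.mp hy)
        obtain ⟨h1, h2, -⟩ := hent p hpl
        rw [Finset.mem_range]
        rcases hor with rfl | rfl <;> omega
      · have h1 : (A.card : ℝ) * L ≤ 2 * (n : ℝ) := by
          have h2 : (A.card : ℝ) ≤ 2 * l.length := by exact_mod_cast hcard2
          have h3 : (lenF l : ℝ) ≤ (n : ℝ) := by exact_mod_cast hlenle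
          nlinarith
        rw [le_div_iff₀ hL0]
        linarith
      · rw [hdec]; exact hvalid
      · rw [hdec]
        have h1 : ε * n ≤ (T.card : ℝ) := by
          rw [hTcard] at hcount
          exact hcount
        have h2 : (T.card : ℝ) ≤ 3 * (lenF l : ℝ) := by
          rw [← hTncard]
          exact_mod_cast hcount3
        linarith
    refine ⟨A, hAS, hp, hs, ?_⟩
    show Cst G n (decode A) σ
    rw [hdec]
    intro p hpl hs' hu'
    exact (hent p hpl).2.2.2 hs' hu'
  -- Step 2: union bound in ℝ≥0∞
  have hpt : ∀ σ : Fin n → E, cind (P σ) * W G σ ≤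
      ∑ A ∈ S, cind (G.IsPath σ ∧ G.StartsAt σ o ∧
        σ ∈ {σ' : Fin n → E | Cst G n (decode A) σ'}) * W G σ := by
    intro σ
    by_cases hσ : P σ
    · obtain ⟨A, hAS, hcst⟩ := hcover σ hσ
      have h1 : cind (P σ) * W G σ = cind (G.IsPath σ ∧ G.StartsAt σ o ∧
          σ ∈ {σ' : Fin n → E | Cst G n (decode A) σ'}) * W G σ := by
        rw [cind_true hσ, cind_true hcst]
      rw [h1]
      exact Finset.single_le_sum (f := fun A => cind (G.IsPath σ ∧ G.StartsAt σ o ∧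
        σ ∈ {σ' : Fin n → E | Cst G n (decode A) σ'}) * W G σ)
        (fun _ _ => zero_le) hAS
    · rw [cind_false hσ, zero_mul]
      exact zero_le
  have hunion : (∑' σ : Fin n → E, cind (P σ) * W G σ) ≤
      ∑ A ∈ S, PS G n o {σ' : Fin n → E | Cst G n (decode A) σ'} := by
    calc (∑' σ : Fin n → E, cind (P σ) * W G σ)
        ≤ ∑' σ : Fin n → E, ∑ A ∈ S, cind (G.IsPath σ ∧ G.StartsAt σ o ∧
            σ ∈ {σ' : Fin n → E | Cst G n (decode A) σ'}) * W G σ :=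
          ENNReal.tsum_le_tsum hpt
      _ = ∑ A ∈ S, ∑' σ : Fin n → E, cind (G.IsPath σ ∧ G.StartsAt σ o ∧
            σ ∈ {σ' : Fin n → E | Cst G n (decode A) σ'}) * W G σ :=
          Summable.tsum_finsetSum (fun _ _ => ENNReal.summable)
      _ = ∑ A ∈ S, PS G n o {σ' : Fin n → E | Cst G n (decode A) σ'} := rfl
  have hterm : ∀ A ∈ S, PS G n o {σ' : Fin n → E | Cst G n (decode A) σ'} ≤
      ENNReal.ofReal ρrp := by
    intro A hAS
    obtain ⟨-, h2⟩ := Finset.mem_filter.mp hAS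
    obtain ⟨-, hval, hlen⟩ := h2
    have h3 := main_bound G hdeg hρ0 hret (decode A) n o hval
    refine h3.trans ?_
    rw [← ENNReal.ofReal_pow hρ0]
    apply ENNReal.ofReal_le_ofReal
    rcases eq_or_lt_of_le hρ0 with hρz | hρpos
    · rw [← hρz]
      have hm1 : 1 ≤ lenF (decode A) := by
        by_contra hc
        have : lenF (decode A) = 0 := by omega
        rw [this] at hlen
        simp at hlen
        linarith
      rw [zero_pow (by omega : lenF (decode A) ≠ 0)]
      exact hρrp0
    · rw [hρrp, ← Real.rpow_natCast ρ]
      exact Real.rpow_le_rpow_of_exponent_ge hρpos hρ1.le hlen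
  have hENN : (∑' σ : Fin n → E, cind (P σ) * W G σ) ≤
      (S.card : ℝ≥0∞) * ENNReal.ofReal ρrp := by
    refine hunion.trans ?_
    calc ∑ A ∈ S, PS G n o {σ' : Fin n → E | Cst G n (decode A) σ'}
        ≤ ∑ _A ∈ S, ENNReal.ofReal ρrp := Finset.sum_le_sum hterm
      _ = (S.card : ℝ≥0∞) * ENNReal.ofReal ρrp := by
          rw [Finset.sum_const, nsmul_eq_mul]
  -- Step 3: counting S
  have hScount : (S.card : ℝ) ≤ Real.exp ((6 * n / L) * Real.log L) := by
    set M : ℕ := ⌊2 * (n : ℝ) / L⌋₊ with hM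
    have hsub : S ⊆ (Finset.range (M + 1)).biUnion
        (fun j => Finset.powersetCard j (Finset.range n)) := by
      intro A hAS
      obtain ⟨h1, h2, -, -⟩ := Finset.mem_filter.mp hAS
      rw [Finset.mem_biUnion]
      refine ⟨A.card, ?_, Finset.mem_powersetCard.mpr ⟨Finset.mem_powerset.mp h1, rfl⟩⟩
      rw [Finset.mem_range, Nat.lt_succ_iff, hM]
      exact Nat.le_floor h2
    have h1 : S.card ≤ ∑ j ∈ Finset.range (M + 1), n.choose j := by
      calc S.card ≤ ((Finset.range (M + 1)).biUnion
            (fun j => Finset.powersetCard j (Finset.range n))).card :=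
            Finset.card_le_card hsub
        _ ≤ ∑ j ∈ Finset.range (M + 1), (Finset.powersetCard j (Finset.range n)).card :=
            Finset.card_biUnion_le
        _ = ∑ j ∈ Finset.range (M + 1), n.choose j := by
            apply Finset.sum_congr rfl
            intro j _
            rw [Finset.card_powersetCard, Finset.card_range]
    have h2 : (S.card : ℝ) ≤ ∑ j ∈ Finset.range (M + 1), (n.choose j : ℝ) := by
      rw [← Nat.cast_sum]
      exact_mod_cast h1
    exact h2.trans (count_sum_bound n hn L hL)
  -- Step 4: back to ℝ
  have hsubW : (∑' σ : {σ : Fin n → E // P σ}, W G σ.1) =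
      ∑' σ : Fin n → E, cind (P σ) * W G σ := by
    have h1 : (∑' σ : {σ : Fin n → E // P σ}, W G σ.1) =
        ∑' σ : Fin n → E, Set.indicator {σ' : Fin n → E | P σ'} (W G) σ :=
      tsum_subtype {σ' : Fin n → E | P σ'} (W G)
    rw [h1]
    apply tsum_congr
    intro σ
    by_cases hσ : P σ
    · rw [cind_true hσ, one_mul,
        Set.indicator_of_mem (show σ ∈ {σ' : Fin n → E | P σ'} from hσ) (W G)]
    · rw [cind_false hσ, zero_mul,
        Set.indicator_of_notMem (show σ ∉ {σ' : Fin n → E | P σ'} from hσ) (W G)]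
  have hLHS : (∑' σ : {σ : Fin n → E // P σ}, G.pathWeight σ.1) =
      (∑' σ : {σ : Fin n → E // P σ}, W G σ.1).toReal := by
    have h1 : (∑' σ : {σ : Fin n → E // P σ}, W G σ.1).toReal
        = ∑' σ : {σ : Fin n → E // P σ}, (W G σ.1).toReal :=
      ENNReal.tsum_toReal_eq (f := fun σ : {σ : Fin n → E // P σ} => W G σ.1)
        (fun σ => W_ne_top G σ.1)
    rw [h1]
    apply tsum_congr
    intro σ
    exact (ENNReal.toReal_ofReal (pathWeight_nonneg G σ.1)).symm
  have hfinal : (∑' σ : {σ : Fin n → E // P σ}, G.pathWeight σ.1) ≤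
      (S.card : ℝ) * ρrp := by
    rw [hLHS, hsubW]
    have hub : (∑' σ : Fin n → E, cind (P σ) * W G σ).toReal ≤
        ((S.card : ℝ≥0∞) * ENNReal.ofReal ρrp).toReal := by
      apply ENNReal.toReal_mono _ hENN
      exact ENNReal.mul_ne_top (ENNReal.natCast_ne_top _) ENNReal.ofReal_ne_top
    refine hub.trans ?_
    rw [ENNReal.toReal_mul, ENNReal.toReal_natCast, ENNReal.toReal_ofReal hρrp0]
  refine hfinal.trans ?_
  have h1ρ : 0 < 1 - ρ := by linarith
  have hstep : (S.card : ℝ) * ρrp ≤ Real.exp ((6 * n / L) * Real.log L) * ρrp :=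
    mul_le_mul_of_nonneg_right hScount hρrp0
  refine hstep.trans ?_
  rw [le_div_iff₀ h1ρ]
  have ha : 0 ≤ Real.exp ((6 * n / L) * Real.log L) * ρrp :=
    mul_nonneg (Real.exp_pos _).le hρrp0
  exact mul_le_of_le_one_right ha (by linarith)
end

section
/- Let Q_n(j) denote the probability that a binomial random variable with parameters ⌊n/2⌋ and 1/d takes the value j, where d ≥ 2 is fixed. For every c' > 0 there exists c > 0 such that for all n ≥ 1, all integers k ∈ [0, √n], and all integers j with |j - n/(2d)| ≤ c'√n, one has Q_{n+2k}(j+k) ≥ c · Q_n(j). -/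
lemma aux_choose_shift (m j : ℕ) (s : ℝ) (hs : 0 ≤ s) :
    ∀ k : ℕ, (∀ i : ℕ, 1 ≤ i → i ≤ k → s * ((j : ℝ) + i) ≤ (m : ℝ) + i) →
      (m.choose j : ℝ) * s ^ k ≤ ((m + k).choose (j + k) : ℝ) := by
  intro k
  induction k with
  | zero => intro _; simp
  | succ k ih =>
    intro h
    have ih' := ih (fun i h1 h2 => h i h1 (h2.trans (Nat.le_succ k)))
    have hstep := h (k + 1) (by omega) le_rfl
    push_cast at hstep
    have hid : ((m + (k + 1)).choose (j + (k + 1)) : ℝ) * ((j : ℝ) + (k + 1))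
        = ((m : ℝ) + (k + 1)) * (((m + k).choose (j + k)) : ℝ) := by
      have h0 := Nat.add_one_mul_choose_eq (m + k) (j + k)
      have h0' : (((m + k) + 1) * (m + k).choose (j + k) : ℝ)
          = (((m + k) + 1).choose ((j + k) + 1) : ℝ) * ((j + k) + 1) := by
        exact_mod_cast congrArg (Nat.cast (R := ℝ)) h0
      have e1 : m + (k + 1) = (m + k) + 1 := by omega
      have e2 : j + (k + 1) = (j + k) + 1 := by omega
      rw [e1, e2]
      push_cast at h0' ⊢
      linarith
    have hC : (0 : ℝ) ≤ ((m + k).choose (j + k) : ℝ) := Nat.cast_nonneg _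
    have hjk : (0 : ℝ) < (j : ℝ) + (k + 1) := by positivity
    have h1 : (m.choose j : ℝ) * s ^ (k + 1) ≤ ((m + k).choose (j + k) : ℝ) * s := by
      calc (m.choose j : ℝ) * s ^ (k + 1) = ((m.choose j : ℝ) * s ^ k) * s := by ring
        _ ≤ _ := mul_le_mul_of_nonneg_right ih' hs
    have h2 : ((m + k).choose (j + k) : ℝ) * s ≤ ((m + (k + 1)).choose (j + (k + 1)) : ℝ) := by
      nlinarith [mul_le_mul_of_nonneg_left hstep hC]
    calc (m.choose j : ℝ) * s ^ (k + 1) ≤ ((m + k).choose (j + k) : ℝ) * s := h1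
      _ ≤ _ := h2

/-- **de Moivre–Laplace local comparison.**  Let `Q n j` be the probability that a
binomial random variable with parameters `⌊n/2⌋` and `1/d` equals `j`.  For every
`c' > 0` there is `c > 0` such that for all `n ≥ 1`, all integers `0 ≤ k ≤ √n`, and
all `j` with `|j - n/(2d)| ≤ c'√n`, one has `Q (n+2k) (j+k) ≥ c · Q n j`. -/
theorem binomial_shift_comparison (d : ℕ) (hd : 2 ≤ d) (c' : ℝ) (hc' : 0 < c') :
    ∃ c : ℝ, 0 < c ∧
      ∀ n : ℕ, 1 ≤ n → ∀ k : ℕ, (k : ℝ) ≤ Real.sqrt n →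
        ∀ j : ℕ, |(j : ℝ) - n / (2 * d)| ≤ c' * Real.sqrt n →
          c * (((n / 2).choose j : ℝ) * (1 / d) ^ j * (1 - 1 / d) ^ (n / 2 - j))
            ≤ (((n + 2 * k) / 2).choose (j + k) : ℝ) * (1 / d) ^ (j + k) *
                (1 - 1 / d) ^ ((n + 2 * k) / 2 - (j + k)) := by
  have hd2 : (2 : ℝ) ≤ (d : ℝ) := by exact_mod_cast hd
  have hd0 : (0 : ℝ) < (d : ℝ) := by linarith
  set B : ℝ := 2 * (d : ℝ) * (c' + 1) + 1 with hBdef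
  have hB : 0 < B := by nlinarith
  refine ⟨Real.exp (-(2 * B)), Real.exp_pos _, ?_⟩
  intro n hn k hk j hj
  have hq : (0 : ℝ) ≤ 1 - 1 / (d : ℝ) := by
    rw [sub_nonneg, div_le_one hd0]; linarith
  have hp : (0 : ℝ) < 1 / (d : ℝ) := by positivity
  obtain ⟨m, hmdef⟩ : ∃ m, n / 2 = m := ⟨n / 2, rfl⟩
  rw [hmdef]
  have hdiv : (n + 2 * k) / 2 = m + k := by omega
  have hsub : (m + k) - (j + k) = m - j := by omega
  rw [hdiv, hsub]
  suffices key : Real.exp (-(2 * B)) * (m.choose j : ℝ)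
      ≤ ((m + k).choose (j + k) : ℝ) * (1 / (d : ℝ)) ^ k by
    have hnn : (0 : ℝ) ≤ (1 / (d : ℝ)) ^ j * (1 - 1 / (d : ℝ)) ^ (m - j) :=
      mul_nonneg (pow_nonneg hp.le _) (pow_nonneg hq _)
    calc Real.exp (-(2 * B)) * ((m.choose j : ℝ) * (1 / d) ^ j * (1 - 1 / d) ^ (m - j))
        = (Real.exp (-(2 * B)) * (m.choose j : ℝ)) * ((1 / (d:ℝ)) ^ j * (1 - 1 / (d:ℝ)) ^ (m - j)) := by
          ring
      _ ≤ (((m + k).choose (j + k) : ℝ) * (1 / (d:ℝ)) ^ k) * ((1 / (d:ℝ)) ^ j * (1 - 1 / (d:ℝ)) ^ (m - j)) :=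
          mul_le_mul_of_nonneg_right key hnn
      _ = ((m + k).choose (j + k) : ℝ) * (1 / d) ^ (j + k) * (1 - 1 / d) ^ (m - j) := by
          rw [pow_add]; ring
  by_cases hjm : m < j
  · rw [Nat.choose_eq_zero_of_lt hjm]
    push_cast
    have : (0:ℝ) ≤ ((m + k).choose (j + k) : ℝ) * (1 / (d:ℝ)) ^ k := by positivity
    linarith
  push_neg at hjm
  by_cases hm0 : m = 0
  · -- then j = 0, n = 1, k ≤ 1
    have hj0 : j = 0 := by omega
    have hn1 : n = 1 := by omega
    subst hj0; subst hm0
    have hk1 : k ≤ 1 := by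
      have h1 : (k : ℝ) ≤ 1 := by
        rw [hn1] at hk; simpa [Real.sqrt_one] using hk
      exact_mod_cast h1
    have hde : (d : ℝ) ≤ Real.exp (2 * B) := by
      have := Real.add_one_le_exp (2 * B)
      nlinarith
    have hc1 : Real.exp (-(2 * B)) ≤ 1 / (d : ℝ) := by
      rw [Real.exp_neg, one_div]
      exact inv_anti₀ hd0 hde
    interval_cases k
    · simp only [Nat.choose_self, Nat.cast_one, pow_zero, mul_one, Nat.zero_add, Nat.choose_zero_right]
      have : Real.exp (-(2 * B)) ≤ 1 := by
        rw [Real.exp_le_one_iff]; linarith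
      simpa using this
    · simp only [Nat.choose_self, Nat.cast_one, pow_one, Nat.zero_add]
      simpa using hc1
  have hm1 : 1 ≤ m := by omega
  have hm1' : (1 : ℝ) ≤ (m : ℝ) := by exact_mod_cast hm1
  have hsm : (0 : ℝ) < Real.sqrt m := Real.sqrt_pos.mpr (by linarith)
  have hsm1 : (1 : ℝ) ≤ Real.sqrt m := by
    rw [show (1:ℝ) = Real.sqrt 1 by rw [Real.sqrt_one]]
    exact Real.sqrt_le_sqrt hm1'
  have hmm : Real.sqrt m * Real.sqrt m = (m : ℝ) := Real.mul_self_sqrt (Nat.cast_nonneg m)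
  have hn2m : (n : ℝ) ≤ 2 * (m : ℝ) + 1 := by
    have : n ≤ 2 * m + 1 := by omega
    exact_mod_cast this
  have hsn : Real.sqrt n ≤ 2 * Real.sqrt m := by
    have h4 : (n : ℝ) ≤ (2 * Real.sqrt m) * (2 * Real.sqrt m) := by nlinarith
    have := Real.sqrt_le_sqrt h4
    rwa [Real.sqrt_mul_self (by positivity)] at this
  have hsn0 : (0 : ℝ) ≤ Real.sqrt n := Real.sqrt_nonneg n
  have hj' : (j : ℝ) ≤ (n : ℝ) / (2 * d) + c' * Real.sqrt n := by
    have := (abs_le.mp hj).2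
    linarith
  set t : ℝ := Real.sqrt m + B with htdef
  have ht : 0 < t := by positivity
  have H : (d : ℝ) * ((j : ℝ) + (k : ℝ)) ≤ Real.sqrt m * t := by
    have e1 : (d : ℝ) * ((n : ℝ) / (2 * d)) = (n : ℝ) / 2 := by
      field_simp
    have b1 : (d : ℝ) * (j : ℝ) ≤ (d:ℝ) * ((n : ℝ) / (2 * d)) + (d:ℝ) * (c' * Real.sqrt n) := by
      have := mul_le_mul_of_nonneg_left hj' hd0.le
      rw [mul_add] at this
      linarith
    have b2 : (d : ℝ) * (k : ℝ) ≤ (d : ℝ) * Real.sqrt n := mul_le_mul_of_nonneg_left hk hd0.le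
    have b3 : (d:ℝ) * (c' + 1) * Real.sqrt n ≤ (d:ℝ) * (c' + 1) * (2 * Real.sqrt m) := by
      have hcd : (0:ℝ) ≤ (d:ℝ) * (c' + 1) := by positivity
      exact mul_le_mul_of_nonneg_left hsn hcd
    have e2 : Real.sqrt m * t = (m : ℝ) + B * Real.sqrt m := by
      rw [htdef, mul_add, hmm]; ring
    rw [e2, hBdef]
    linarith [b1, b2, b3, e1, hsm1, hn2m]
  have hstep : ∀ i : ℕ, 1 ≤ i → i ≤ k →
      ((d : ℝ) * Real.sqrt m / t) * ((j : ℝ) + i) ≤ (m : ℝ) + i := by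
    intro i h1 h2
    have hik : (i : ℝ) ≤ (k : ℝ) := by exact_mod_cast h2
    have hi0 : (0 : ℝ) ≤ (i : ℝ) := Nat.cast_nonneg i
    have hdik : (d : ℝ) * (i : ℝ) ≤ (d : ℝ) * (k : ℝ) :=
      mul_le_mul_of_nonneg_left hik hd0.le
    have Hi : (d : ℝ) * ((j : ℝ) + i) ≤ Real.sqrt m * t := by
      have : (d : ℝ) * ((j : ℝ) + i) = (d : ℝ) * ((j : ℝ) + k) + ((d:ℝ) * i - (d:ℝ) * k) := by ring
      linarith [H]
    rw [div_mul_eq_mul_div, div_le_iff₀ ht]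
    have h5 := mul_le_mul_of_nonneg_left Hi hsm.le
    have e3 : Real.sqrt m * (Real.sqrt m * t) = (m : ℝ) * t := by rw [← mul_assoc, hmm]
    have e4 : (m : ℝ) * t ≤ ((m : ℝ) + i) * t :=
      mul_le_mul_of_nonneg_right (by linarith) ht.le
    linarith [h5, e3, e4]
  have hs0 : (0 : ℝ) ≤ (d : ℝ) * Real.sqrt m / t := by positivity
  have claim := aux_choose_shift m j ((d : ℝ) * Real.sqrt m / t) hs0 k hstep
  -- lower bound the ratio power
  have hrk : Real.exp (-(2 * B)) ≤ (Real.sqrt m / t) ^ k := by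
    have hts : t / Real.sqrt m = 1 + B / Real.sqrt m := by
      rw [htdef, add_div, div_self hsm.ne']
    have hu : 1 + B / Real.sqrt m ≤ Real.exp (B / Real.sqrt m) := by
      linarith [Real.add_one_le_exp (B / Real.sqrt m)]
    have h2 : (t / Real.sqrt m) ^ k ≤ Real.exp (B / Real.sqrt m) ^ k := by
      apply pow_le_pow_left₀ (by positivity)
      rw [hts]; exact hu
    have h3 : Real.exp (B / Real.sqrt m) ^ k = Real.exp ((k : ℝ) * (B / Real.sqrt m)) :=
      (Real.exp_nat_mul _ k).symm
    have h4 : (k : ℝ) * (B / Real.sqrt m) ≤ 2 * B := by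
      rw [mul_div_assoc', div_le_iff₀ hsm]
      have hk2 : (k : ℝ) ≤ 2 * Real.sqrt m := hk.trans hsn
      have := mul_le_mul_of_nonneg_right hk2 hB.le
      linarith
    have h5 : (t / Real.sqrt m) ^ k ≤ Real.exp (2 * B) := by
      calc (t / Real.sqrt m) ^ k ≤ Real.exp ((k : ℝ) * (B / Real.sqrt m)) := by rw [← h3]; exact h2
        _ ≤ Real.exp (2 * B) := Real.exp_le_exp.mpr h4
    have h6 : Real.sqrt m / t = (t / Real.sqrt m)⁻¹ := by rw [inv_div]
    rw [h6, inv_pow, Real.exp_neg]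
    exact inv_anti₀ (by positivity) h5
  -- assemble
  have hsp : ((d : ℝ) * Real.sqrt m / t) * (1 / (d : ℝ)) = Real.sqrt m / t := by
    field_simp
  have step1 : (m.choose j : ℝ) * (Real.sqrt m / t) ^ k
      ≤ ((m + k).choose (j + k) : ℝ) * (1 / (d : ℝ)) ^ k := by
    have := mul_le_mul_of_nonneg_right claim (pow_nonneg hp.le k)
    calc (m.choose j : ℝ) * (Real.sqrt m / t) ^ k
        = (m.choose j : ℝ) * (((d : ℝ) * Real.sqrt m / t) * (1 / (d : ℝ))) ^ k := by rw [hsp]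
      _ = ((m.choose j : ℝ) * ((d : ℝ) * Real.sqrt m / t) ^ k) * (1 / (d : ℝ)) ^ k := by
          rw [mul_pow]; ring
      _ ≤ _ := this
  calc Real.exp (-(2 * B)) * (m.choose j : ℝ)
      ≤ (m.choose j : ℝ) * (Real.sqrt m / t) ^ k := by
        have hCnn : (0:ℝ) ≤ (m.choose j : ℝ) := Nat.cast_nonneg _
        have := mul_le_mul_of_nonneg_left hrk hCnn
        linarith
    _ ≤ _ := step1
end
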